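/- arXiv:math/0610056 — 5 statements merged into one kernel-verified Lean document; each statement's English description precedes it below -/
import Mathlib

section
/- If X is a real-valued random variable whose characteristic function is real-valued and nonnegative, then for every x ∈ ℝ and δ > 0, P(X ∈ [x−δ, x+δ]) ≤ 4·P(X ∈ (−δ, δ)). -/
open MeasureTheory Filter

noncomputable def wfn (b : ℝ) : ℝ → ℝ := fun t => (1 - Real.cos (b * t)) / t ^ 2

lemma one_sub_cos_le (x : ℝ) : 1 - Real.cos x ≤ x ^ 2 / 2 := by
  have h1 := Real.cos_two_mul' (x / 2)
  rw [show 2 * (x / 2) = x by ring] at h1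
  have h2 := Real.sin_sq_add_cos_sq (x / 2)
  have h3 := Real.sin_sq_le_sq (x := x / 2)
  nlinarith

lemma wfn_nonneg (b t : ℝ) : 0 ≤ wfn b t :=
  div_nonneg (by nlinarith [Real.cos_le_one (b * t)]) (sq_nonneg t)

lemma wfn_le (b t : ℝ) : wfn b t ≤ (b ^ 2 + 4) * (1 + t ^ 2)⁻¹ := by
  have hpos : (0:ℝ) < 1 + t ^ 2 := by positivity
  rcases le_or_gt (t ^ 2) 1 with h | h
  · have h1 : 1 - Real.cos (b * t) ≤ (b * t) ^ 2 / 2 := one_sub_cos_le _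
    rcases eq_or_ne t 0 with rfl | ht
    · simp [wfn]; positivity
    · have ht2 : (0:ℝ) < t ^ 2 := by positivity
      rw [wfn, div_le_iff₀ ht2]
      have heq : (b ^ 2 + 4) * (1 + t ^ 2)⁻¹ * t ^ 2 = (b ^ 2 + 4) * t ^ 2 / (1 + t ^ 2) := by
        field_simp
      rw [heq, le_div_iff₀ hpos]
      nlinarith [Real.cos_le_one (b * t), sq_nonneg (b * t)]
  · have h1 : 1 - Real.cos (b * t) ≤ 2 := by nlinarith [Real.neg_one_le_cos (b * t)]
    have ht2 : (0:ℝ) < t ^ 2 := by linarith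
    rw [wfn, div_le_iff₀ ht2]
    have heq : (b ^ 2 + 4) * (1 + t ^ 2)⁻¹ * t ^ 2 = (b ^ 2 + 4) * t ^ 2 / (1 + t ^ 2) := by
      field_simp
    rw [heq, le_div_iff₀ hpos]
    nlinarith [sq_nonneg b, sq_nonneg (b * t)]

lemma wfn_integrable (b : ℝ) : Integrable (wfn b) := by
  have hmeas : Measurable (wfn b) := by
    unfold wfn; fun_prop
  refine Integrable.mono' (integrable_inv_one_add_sq.const_mul (b ^ 2 + 4))
    hmeas.aestronglyMeasurable ?_
  filter_upwards with t
  rw [Real.norm_eq_abs, abs_of_nonneg (wfn_nonneg b t)]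
  exact wfn_le b t

lemma wfn_integral (b : ℝ) : ∫ t, wfn b t = |b| * ∫ t, wfn 1 t := by
  rcases eq_or_ne b 0 with rfl | hb
  · simp [wfn]
  · have h : wfn b = fun t => b ^ 2 * (wfn 1) (b * t) := by
      funext t
      rcases eq_or_ne t 0 with rfl | ht
      · simp [wfn]
      · have : b * t ≠ 0 := mul_ne_zero hb ht
        rw [wfn, wfn, one_mul, mul_pow]
        rw [mul_div_assoc', mul_div_mul_left _ _ (pow_ne_zero 2 hb)]
    rw [h, MeasureTheory.integral_const_mul _ _, MeasureTheory.Measure.integral_comp_mul_left (wfn 1) b,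
      smul_eq_mul, abs_inv, ← sq_abs b]
    have hb' : |b| ≠ 0 := abs_ne_zero.2 hb
    rw [pow_two, mul_assoc, mul_inv_cancel_left₀ hb']

lemma wfn_integral_pos : 0 < ∫ t, wfn 1 t := by
  have hsub : ∫ t in Set.Icc (1:ℝ) 2, wfn 1 t ≤ ∫ t, wfn 1 t :=
    setIntegral_le_integral (wfn_integrable 1) (Filter.Eventually.of_forall (wfn_nonneg 1))
  refine lt_of_lt_of_le ?_ hsub
  have h1 : (1 - Real.cos 1) / 4 * (volume (Set.Icc (1:ℝ) 2)).toReal ≤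
      ∫ t in Set.Icc (1:ℝ) 2, wfn 1 t := by
    refine le_trans (le_of_eq (by simp only [smul_eq_mul, Measure.real])) (setIntegral_ge_of_const_le_real (c := (1 - Real.cos 1) / 4) measurableSet_Icc (by simp) ?_
      ((wfn_integrable 1).integrableOn))
    intro t ht
    obtain ⟨ht1, ht2⟩ := ht
    have hcos : Real.cos t ≤ Real.cos 1 :=
      Real.cos_le_cos_of_nonneg_of_le_pi (by norm_num)
        (le_trans ht2 (by linarith [Real.pi_gt_three])) ht1
    have htpos : (0:ℝ) < t ^ 2 := by nlinarith
    have ht2sq : t ^ 2 ≤ 4 := by nlinarith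
    rw [wfn, one_mul, le_div_iff₀ htpos]
    nlinarith [mul_nonneg (sub_nonneg.2 (Real.cos_le_one 1)) (by linarith : (0:ℝ) ≤ 4 - t ^ 2)]
  refine lt_of_lt_of_le ?_ h1
  rw [Real.volume_Icc]
  norm_num
  nlinarith [Real.cos_one_le]

lemma wfn_mul_cos_eq (δ v : ℝ) : (fun t => wfn δ t * Real.cos (v * t)) =
    fun t => (wfn (δ + v) t + wfn (δ - v) t) / 2 - wfn v t := by
  funext t
  rcases eq_or_ne t 0 with rfl | ht
  · simp [wfn]
  · have h2 : t ^ 2 ≠ 0 := pow_ne_zero 2 ht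
    rw [wfn, wfn, wfn, wfn, show (δ + v) * t = δ * t + v * t by ring,
      show (δ - v) * t = δ * t - v * t by ring, Real.cos_add, Real.cos_sub]
    field_simp
    ring

lemma key_integrable (δ v : ℝ) : Integrable (fun t => wfn δ t * Real.cos (v * t)) := by
  rw [wfn_mul_cos_eq]
  exact (((wfn_integrable _).add (wfn_integrable _)).div_const 2).sub (wfn_integrable v)

lemma abs_add_abs_sub (δ v : ℝ) (hδ : 0 ≤ δ) : |δ + v| + |δ - v| = 2 * max δ |v| := by
  rcases le_total |v| δ with h | h
  · obtain ⟨h1, h2⟩ := abs_le.1 h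
    rw [abs_of_nonneg (by linarith), abs_of_nonneg (by linarith), max_eq_left h]
    ring
  · rcases abs_cases v with ⟨h1, h2⟩ | ⟨h1, h2⟩ <;> rw [h1] at h ⊢ <;> rw [max_eq_right h]
    · rw [abs_of_nonneg (by linarith), abs_of_nonpos (by linarith)]; ring
    · rw [abs_of_nonpos (by linarith), abs_of_nonneg (by linarith)]; ring

lemma max_sub_abs (δ v : ℝ) : max δ |v| - |v| = max (δ - |v|) 0 := by
  rcases le_total |v| δ with h | h
  · rw [max_eq_left h, max_eq_left (by linarith)]
  · rw [max_eq_right h, max_eq_right (by linarith)]; ring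

lemma key_value {δ : ℝ} (hδ : 0 ≤ δ) (v : ℝ) :
    ∫ t, wfn δ t * Real.cos (v * t) = (∫ t, wfn 1 t) * max (δ - |v|) 0 := by
  have hadd : Integrable (fun t => wfn (δ + v) t + wfn (δ - v) t) :=
    (wfn_integrable _).add (wfn_integrable _)
  have hdiv : Integrable (fun t => (wfn (δ + v) t + wfn (δ - v) t) / 2) := hadd.div_const 2
  rw [wfn_mul_cos_eq, integral_sub hdiv (wfn_integrable v), integral_div,
    integral_add (wfn_integrable _) (wfn_integrable _),
    wfn_integral (δ + v), wfn_integral (δ - v), wfn_integral v]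
  have habs := abs_add_abs_sub δ v hδ
  have hmax := max_sub_abs δ v
  set c := ∫ t, wfn 1 t
  linear_combination (c / 2) * habs + c * hmax

/-- If `X` is a real-valued random variable whose characteristic function is
real-valued and nonnegative, then for every `x ∈ ℝ` and `δ > 0`,
`P(X ∈ [x−δ, x+δ]) ≤ 4·P(X ∈ (−δ, δ))`. -/
theorem stmt0 {Ω : Type*} [MeasurableSpace Ω] (μ : Measure Ω) [IsProbabilityMeasure μ]
    (X : Ω → ℝ) (hX : Measurable X)
    (hφ : ∀ t : ℝ, 0 ≤ (∫ ω, Complex.exp (t * X ω * Complex.I) ∂μ).re ∧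
      (∫ ω, Complex.exp (t * X ω * Complex.I) ∂μ).im = 0)
    (x : ℝ) (δ : ℝ) (hδ : 0 < δ) :
    μ {ω | X ω ∈ Set.Icc (x - δ) (x + δ)} ≤ 4 * μ {ω | X ω ∈ Set.Ioo (-δ) δ} := by
  have hc : (0:ℝ) < ∫ t, wfn 1 t := wfn_integral_pos
  have hexp_eq : ∀ (t : ℝ) (ω : Ω), (t : ℂ) * (X ω : ℂ) * Complex.I
      = ((t * X ω : ℝ) : ℂ) * Complex.I := by
    intro t ω; push_cast; ring
  have hint_cos : ∀ t : ℝ, Integrable (fun ω => Real.cos (t * X ω)) μ := fun t =>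
    Integrable.mono' (integrable_const 1)
      ((Real.measurable_cos.comp (measurable_const.mul hX)).aestronglyMeasurable)
      (Filter.Eventually.of_forall fun ω => by
        rw [Real.norm_eq_abs]; exact Real.abs_cos_le_one _)
  have hint_sin : ∀ t : ℝ, Integrable (fun ω => Real.sin (t * X ω)) μ := fun t =>
    Integrable.mono' (integrable_const 1)
      ((Real.measurable_sin.comp (measurable_const.mul hX)).aestronglyMeasurable)
      (Filter.Eventually.of_forall fun ω => by
        rw [Real.norm_eq_abs]; exact Real.abs_sin_le_one _)
  have hexp_int : ∀ t : ℝ, Integrable (fun ω => Complex.exp (t * X ω * Complex.I)) μ := by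
    intro t
    refine Integrable.mono' (integrable_const 1) ?_ ?_
    · exact (Complex.measurable_exp.comp
        ((measurable_const.mul (Complex.measurable_ofReal.comp hX)).mul_const
          Complex.I)).aestronglyMeasurable
    · refine Filter.Eventually.of_forall fun ω => ?_
      rw [hexp_eq t ω, Complex.norm_exp_ofReal_mul_I]
  have hEcos : ∀ t : ℝ, ∫ ω, Real.cos (t * X ω) ∂μ
      = (∫ ω, Complex.exp (t * X ω * Complex.I) ∂μ).re := by
    intro t
    have h := integral_re (hexp_int t)
    simp only [RCLike.re_to_complex] at h
    rw [← h]
    refine integral_congr_ae (Filter.Eventually.of_forall fun ω => ?_)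
    show Real.cos (t * X ω) = (Complex.exp (t * X ω * Complex.I)).re
    rw [hexp_eq t ω, Complex.exp_ofReal_mul_I_re]
  have hEsin : ∀ t : ℝ, ∫ ω, Real.sin (t * X ω) ∂μ = 0 := by
    intro t
    have h := integral_im (hexp_int t)
    simp only [RCLike.im_to_complex] at h
    rw [← (hφ t).2, ← h]
    refine integral_congr_ae (Filter.Eventually.of_forall fun ω => ?_)
    show Real.sin (t * X ω) = (Complex.exp (t * X ω * Complex.I)).im
    rw [hexp_eq t ω, Complex.exp_ofReal_mul_I_im]
  have hInner : ∀ (a t : ℝ), ∫ ω, Real.cos ((X ω - a) * t) ∂μ ≤ ∫ ω, Real.cos (t * X ω) ∂μ := by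
    intro a t
    have heq : (fun ω => Real.cos ((X ω - a) * t))
        = fun ω => Real.cos (t * X ω) * Real.cos (t * a) + Real.sin (t * X ω) * Real.sin (t * a) := by
      funext ω
      rw [show (X ω - a) * t = t * X ω - t * a by ring, Real.cos_sub]
    rw [heq, integral_add ((hint_cos t).mul_const _) ((hint_sin t).mul_const _),
      MeasureTheory.integral_mul_const, MeasureTheory.integral_mul_const, hEsin t, zero_mul, add_zero]
    have h0 : 0 ≤ ∫ ω, Real.cos (t * X ω) ∂μ := (hEcos t) ▸ (hφ t).1
    nlinarith [Real.cos_le_one (t * a), Real.neg_one_le_cos (t * a)]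
  -- product integrability
  have hwm : Measurable (wfn δ) := by unfold wfn; fun_prop
  have hprod : ∀ a : ℝ, Integrable
      (Function.uncurry (fun (t : ℝ) (ω : Ω) => wfn δ t * Real.cos ((X ω - a) * t)))
      ((volume : Measure ℝ).prod μ) := by
    intro a
    have hGi : Integrable (fun t : ℝ => (δ ^ 2 + 4) * (1 + t ^ 2)⁻¹) :=
      integrable_inv_one_add_sq.const_mul _
    have hG : Integrable (fun p : ℝ × Ω => (δ ^ 2 + 4) * (1 + p.1 ^ 2)⁻¹)
        ((volume : Measure ℝ).prod μ) := by
      refine (integrable_prod_iff hGi.aestronglyMeasurable.comp_fst).2 ⟨?_, ?_⟩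
      · exact Filter.Eventually.of_forall fun t => by
          exact integrable_const ((δ ^ 2 + 4) * (1 + t ^ 2)⁻¹)
      · simpa [measure_univ] using hGi.norm
    refine Integrable.mono' hG ?_ ?_
    · exact ((hwm.comp measurable_fst).mul (Real.measurable_cos.comp
        (((hX.comp measurable_snd).sub measurable_const).mul measurable_fst))).aestronglyMeasurable
    · refine Filter.Eventually.of_forall fun p => ?_
      rw [Function.uncurry, Real.norm_eq_abs, abs_mul, abs_of_nonneg (wfn_nonneg δ p.1)]
      calc wfn δ p.1 * |Real.cos ((X p.2 - a) * p.1)| ≤ wfn δ p.1 * 1 := by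
            gcongr
            · exact wfn_nonneg δ p.1
            · exact Real.abs_cos_le_one _
        _ = wfn δ p.1 := mul_one _
        _ ≤ _ := wfn_le δ p.1
  have hAint : ∀ a : ℝ, Integrable (fun ω => max (δ - |X ω - a|) 0) μ := by
    intro a
    refine Integrable.mono' (integrable_const δ)
      (((measurable_const.sub ((hX.sub measurable_const).abs)).max
        measurable_const).aestronglyMeasurable) ?_
    refine Filter.Eventually.of_forall fun ω => ?_
    rw [Real.norm_eq_abs, abs_of_nonneg (le_max_right _ _)]
    exact max_le (by linarith [abs_nonneg (X ω - a)]) hδ.le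
  have hKey : ∀ a : ℝ, (∫ t, wfn 1 t) * ∫ ω, max (δ - |X ω - a|) 0 ∂μ
      = ∫ t, ∫ ω, wfn δ t * Real.cos ((X ω - a) * t) ∂μ := by
    intro a
    calc (∫ t, wfn 1 t) * ∫ ω, max (δ - |X ω - a|) 0 ∂μ
        = ∫ ω, (∫ t, wfn 1 t) * max (δ - |X ω - a|) 0 ∂μ :=
          (MeasureTheory.integral_const_mul _ _).symm
      _ = ∫ ω, (∫ t, wfn δ t * Real.cos ((X ω - a) * t)) ∂μ := by
          refine integral_congr_ae (Filter.Eventually.of_forall fun ω => ?_)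
          exact (key_value hδ.le (X ω - a)).symm
      _ = ∫ t, ∫ ω, wfn δ t * Real.cos ((X ω - a) * t) ∂μ :=
          (integral_integral_swap (hprod a)).symm
  have hMono : ∀ a : ℝ, ∫ ω, max (δ - |X ω - a|) 0 ∂μ ≤ ∫ ω, max (δ - |X ω - 0|) 0 ∂μ := by
    intro a
    refine le_of_mul_le_mul_left ?_ hc
    rw [hKey a, hKey 0]
    refine integral_mono ((hprod a).integral_prod_left) ((hprod 0).integral_prod_left) fun t => ?_
    rw [MeasureTheory.integral_const_mul, MeasureTheory.integral_const_mul]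
    refine mul_le_mul_of_nonneg_left ?_ (wfn_nonneg δ t)
    have h00 : ∫ ω, Real.cos ((X ω - 0) * t) ∂μ = ∫ ω, Real.cos (t * X ω) ∂μ := by
      refine integral_congr_ae (Filter.Eventually.of_forall fun ω => ?_)
      show Real.cos ((X ω - 0) * t) = Real.cos (t * X ω)
      exact congrArg Real.cos (by ring)
    rw [h00]
    exact hInner a t
  -- final combination
  have hS1 : MeasurableSet {ω | X ω ∈ Set.Icc (x - δ) (x + δ)} := hX measurableSet_Icc
  have hS2 : MeasurableSet {ω | X ω ∈ Set.Ioo (-δ) δ} := hX measurableSet_Ioo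
  have hdown : (μ {ω | X ω ∈ Set.Icc (x - δ) (x + δ)}).toReal * (δ / 2)
      ≤ (∫ ω, max (δ - |X ω - (x + δ / 2)|) 0 ∂μ) + ∫ ω, max (δ - |X ω - (x - δ / 2)|) 0 ∂μ := by
    calc (μ {ω | X ω ∈ Set.Icc (x - δ) (x + δ)}).toReal * (δ / 2)
        = ∫ _ω in {ω | X ω ∈ Set.Icc (x - δ) (x + δ)}, (δ / 2) ∂μ := by
          rw [setIntegral_const, smul_eq_mul]; rfl
      _ ≤ ∫ ω in {ω | X ω ∈ Set.Icc (x - δ) (x + δ)},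
            (max (δ - |X ω - (x + δ / 2)|) 0 + max (δ - |X ω - (x - δ / 2)|) 0) ∂μ := by
          refine setIntegral_mono_on (integrableOn_const (measure_ne_top μ _))
            (((hAint _).add (hAint _)).integrableOn) hS1 fun ω hω => ?_
          obtain ⟨hl, hr⟩ := hω
          rcases le_total (X ω) x with hcase | hcase
          · have hb : |X ω - (x - δ / 2)| ≤ δ / 2 := abs_le.2 ⟨by linarith, by linarith⟩
            have h2 : δ / 2 ≤ max (δ - |X ω - (x - δ / 2)|) 0 :=
              le_trans (by linarith) (le_max_left _ _)
            linarith [le_max_right (δ - |X ω - (x + δ / 2)|) (0:ℝ)]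
          · have hb : |X ω - (x + δ / 2)| ≤ δ / 2 := abs_le.2 ⟨by linarith, by linarith⟩
            have h2 : δ / 2 ≤ max (δ - |X ω - (x + δ / 2)|) 0 :=
              le_trans (by linarith) (le_max_left _ _)
            linarith [le_max_right (δ - |X ω - (x - δ / 2)|) (0:ℝ)]
      _ ≤ ∫ ω, (max (δ - |X ω - (x + δ / 2)|) 0 + max (δ - |X ω - (x - δ / 2)|) 0) ∂μ :=
          setIntegral_le_integral ((hAint _).add (hAint _))
            (Filter.Eventually.of_forall fun ω => by positivity)
      _ = _ := integral_add (hAint _) (hAint _)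
  have hup : ∫ ω, max (δ - |X ω - 0|) 0 ∂μ ≤ δ * (μ {ω | X ω ∈ Set.Ioo (-δ) δ}).toReal := by
    calc ∫ ω, max (δ - |X ω - 0|) 0 ∂μ
        ≤ ∫ ω, Set.indicator {ω | X ω ∈ Set.Ioo (-δ) δ} (fun _ => δ) ω ∂μ := by
          refine integral_mono (hAint 0) ((integrable_const δ).indicator hS2) fun ω => ?_
          by_cases hω : ω ∈ {ω | X ω ∈ Set.Ioo (-δ) δ}
          · rw [Set.indicator_of_mem hω]
            exact max_le (by linarith [abs_nonneg (X ω - 0)]) hδ.le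
          · rw [Set.indicator_of_notMem hω]
            have habs : δ ≤ |X ω| := by
              rcases not_and_or.1 hω with h | h
              · push_neg at h
                exact le_trans (by linarith) (neg_le_abs _)
              · push_neg at h
                exact le_trans h (le_abs_self _)
            rw [sub_zero]
            exact max_le (by linarith) le_rfl
      _ = (μ {ω | X ω ∈ Set.Ioo (-δ) δ}).toReal • δ := integral_indicator_const δ hS2
      _ = δ * (μ {ω | X ω ∈ Set.Ioo (-δ) δ}).toReal := by rw [smul_eq_mul, mul_comm]
  have hreal : (μ {ω | X ω ∈ Set.Icc (x - δ) (x + δ)}).toReal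
      ≤ 4 * (μ {ω | X ω ∈ Set.Ioo (-δ) δ}).toReal := by
    have h5 : (μ {ω | X ω ∈ Set.Icc (x - δ) (x + δ)}).toReal * (δ / 2)
        ≤ (4 * (μ {ω | X ω ∈ Set.Ioo (-δ) δ}).toReal) * (δ / 2) := by
      have := hMono (x + δ / 2)
      have := hMono (x - δ / 2)
      nlinarith [hdown, hup]
    exact le_of_mul_le_mul_right h5 (by linarith)
  calc μ {ω | X ω ∈ Set.Icc (x - δ) (x + δ)}
      = ENNReal.ofReal ((μ {ω | X ω ∈ Set.Icc (x - δ) (x + δ)}).toReal) :=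
        (ENNReal.ofReal_toReal (measure_ne_top μ _)).symm
    _ ≤ ENNReal.ofReal (4 * (μ {ω | X ω ∈ Set.Ioo (-δ) δ}).toReal) :=
        ENNReal.ofReal_le_ofReal hreal
    _ = ENNReal.ofReal 4 * ENNReal.ofReal ((μ {ω | X ω ∈ Set.Ioo (-δ) δ}).toReal) :=
        ENNReal.ofReal_mul (by norm_num)
    _ = 4 * μ {ω | X ω ∈ Set.Ioo (-δ) δ} := by
        rw [ENNReal.ofReal_toReal (measure_ne_top μ _)]
        norm_num
end

section
/- Let (Y_n) be a sequence of random variables such that ∑_{n≥1} P(Y_n = 0) < ∞. Then there exists a deterministic sequence (g_n) of positive reals increasing to infinity such that lim g_n|Y_n| = +∞ almost surely. -/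
open MeasureTheory Filter

/-- If `∑ P(Y_n = 0) < ∞`, there is a deterministic positive sequence `g_n`
increasing to infinity with `lim g_n |Y_n| = +∞` a.s. -/
theorem stmt2 {Ω : Type*} [MeasurableSpace Ω] (μ : Measure Ω) [IsProbabilityMeasure μ]
    (Y : ℕ → Ω → ℝ) (hY : ∀ n, Measurable (Y n))
    (hsum : (∑' n : ℕ, μ {ω | Y n ω = 0}) ≠ ⊤) :
    ∃ g : ℕ → ℝ, (∀ n, 0 < g n) ∧ Monotone g ∧ Tendsto g atTop atTop ∧
      ∀ᵐ ω ∂μ, Tendsto (fun n => g n * |Y n ω|) atTop atTop := by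
  -- Step 1: choose ε n ∈ (0,1] with μ {|Y n| < ε n} ≤ μ {Y n = 0} + 2⁻ⁿ
  have key : ∀ n : ℕ, ∃ ε : ℝ, 0 < ε ∧ ε ≤ 1 ∧
      μ {ω | |Y n ω| < ε} ≤ μ {ω | Y n ω = 0} + (1 / 2) ^ n := by
    intro n
    set s : ℕ → Set Ω := fun m => {ω | |Y n ω| < 1 / (m + 1)} with hs
    have hmeas : ∀ m, MeasurableSet (s m) := fun m =>
      measurableSet_lt (hY n).abs measurable_const
    have hanti : Antitone s := by
      intro a b hab ω hω
      simp only [hs, Set.mem_setOf_eq] at hω ⊢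
      refine lt_of_lt_of_le hω ?_
      apply one_div_le_one_div_of_le (by positivity)
      exact_mod_cast by exact_mod_cast add_le_add_left (Nat.cast_le.2 hab) 1
    have hint : ⋂ m, s m = {ω | Y n ω = 0} := by
      ext ω
      simp only [Set.mem_iInter, hs, Set.mem_setOf_eq]
      constructor
      · intro h
        by_contra hne
        have habs : 0 < |Y n ω| := abs_pos.2 hne
        obtain ⟨m, hm⟩ := exists_nat_one_div_lt habs
        exact absurd (h m) (not_lt.2 hm.le)
      · intro h m
        rw [h]
        simp
        positivity
    have htend := tendsto_measure_iInter_atTop (μ := μ)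
      (fun m => (hmeas m).nullMeasurableSet) hanti ⟨0, measure_ne_top μ _⟩
    rw [hint] at htend
    have hlt : μ {ω | Y n ω = 0} < μ {ω | Y n ω = 0} + (1 / 2) ^ n := by
      exact ENNReal.lt_add_right (measure_ne_top μ _) (pow_ne_zero n (by norm_num))
    have hev : ∀ᶠ m in atTop, μ (s m) < μ {ω | Y n ω = 0} + (1 / 2) ^ n :=
      htend.eventually_lt_const hlt
    obtain ⟨m, hm⟩ := hev.exists
    refine ⟨1 / (m + 1), by positivity, ?_, hm.le⟩
    rw [div_le_one (by positivity)]
    linarith [Nat.cast_nonneg (α := ℝ) m]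
  choose ε hε0 hε1 hεμ using key
  -- Step 2: define g
  set g : ℕ → ℝ := fun n => 1 + ∑ k ∈ Finset.range (n + 1), (k : ℝ) / ε k with hg
  have hterm : ∀ k : ℕ, 0 ≤ (k : ℝ) / ε k := fun k =>
    div_nonneg (Nat.cast_nonneg k) (hε0 k).le
  have hgpos : ∀ n, 0 < g n := fun n =>
    add_pos_of_pos_of_nonneg one_pos (Finset.sum_nonneg fun k _ => hterm k)
  have hgmono : Monotone g := by
    intro a b hab
    refine add_le_add_right (Finset.sum_le_sum_of_subset_of_nonneg ?_ fun k _ _ => hterm k) 1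
    exact Finset.range_subset_range.2 (by omega)
  have hgdiv : ∀ n : ℕ, (n : ℝ) / ε n ≤ g n := fun n =>
    le_add_of_nonneg_of_le zero_le_one
      (Finset.single_le_sum (fun k _ => hterm k) (Finset.self_mem_range_succ n))
  have hgn : ∀ n : ℕ, (n : ℝ) ≤ g n := by
    intro n
    refine le_trans ?_ (hgdiv n)
    rw [le_div_iff₀ (hε0 n)]
    nlinarith [Nat.cast_nonneg (α := ℝ) n, hε1 n, hε0 n]
  have hgtop : Tendsto g atTop atTop :=
    tendsto_atTop_mono hgn tendsto_natCast_atTop_atTop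
  refine ⟨g, hgpos, hgmono, hgtop, ?_⟩
  -- Step 3: Borel–Cantelli
  have hBC : μ (limsup (fun n => {ω | |Y n ω| < ε n}) atTop) = 0 := by
    apply measure_limsup_atTop_eq_zero
    have hle : (∑' n : ℕ, μ {ω | |Y n ω| < ε n}) ≤
        (∑' n : ℕ, μ {ω | Y n ω = 0}) + ∑' n : ℕ, ((1 : ENNReal) / 2) ^ n := by
      rw [← ENNReal.tsum_add]
      exact ENNReal.tsum_le_tsum hεμ
    refine ne_top_of_le_ne_top ?_ hle
    apply ENNReal.add_ne_top.2
    refine ⟨hsum, ?_⟩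
    rw [ENNReal.tsum_geometric]
    simp [ENNReal.sub_half]
  have hae : ∀ᵐ ω ∂μ, ω ∉ limsup (fun n => {ω | |Y n ω| < ε n}) atTop := by
    rw [ae_iff]
    simpa using hBC
  filter_upwards [hae] with ω hω
  rw [Filter.mem_limsup_iff_frequently_mem, not_frequently] at hω
  refine tendsto_atTop_mono' atTop ?_ tendsto_natCast_atTop_atTop
  filter_upwards [hω] with n hn
  simp only [Set.mem_setOf_eq, not_lt] at hn
  calc (n : ℝ) = (n / ε n) * ε n := (div_mul_cancel₀ _ (hε0 n).ne').symm
  _ ≤ g n * |Y n ω| := mul_le_mul (hgdiv n) hn (hε0 n).le (hgpos n).le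
end

section
/- Let (A_n) be a sequence of measurable sets such that there exist n_0 ≥ 1 and c > 0 with P(A_j ∩ A_k) ≤ c·P(A_j)·P(A_{k−j}) for all k, j ≥ n_0 with k − j ≥ n_0. Then P(A_n infinitely often) > 0 if and only if ∑_n P(A_n) = +∞. -/
open MeasureTheory Filter
open scoped ENNReal

private lemma shiftSumLe {Ω : Type*} [MeasurableSpace Ω] (μ : Measure Ω)
    (A : ℕ → Set Ω) (n₀ m n a : ℕ) :
    ∑ b ∈ (Finset.Icc m n).filter (fun b => a + n₀ ≤ b), μ (A (b - a))
      ≤ ∑ i ∈ Finset.Icc n₀ n, μ (A i) := by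
  rw [← Finset.sum_image (f := fun i => μ (A i)) (g := fun b => b - a)
    (by intro x hx y hy h; have h' : x - a = y - a := h
        simp only [Finset.mem_coe, Finset.mem_filter, Finset.mem_Icc] at hx hy; omega)]
  apply Finset.sum_le_sum_of_subset
  intro i hi
  simp only [Finset.mem_image, Finset.mem_filter, Finset.mem_Icc] at hi ⊢
  obtain ⟨b, ⟨⟨hb1, hb2⟩, hb3⟩, rfl⟩ := hi
  omega

private lemma keyLemma {Ω : Type*} [MeasurableSpace Ω] (μ : Measure Ω) [IsProbabilityMeasure μ]
    (A : ℕ → Set Ω) (hA : ∀ n, MeasurableSet (A n))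
    (n₀ : ℕ) (hn₀ : 1 ≤ n₀) (c : ℝ≥0∞) (hc : 0 < c) (hc' : c ≠ ⊤)
    (hbound : ∀ j k : ℕ, n₀ ≤ j → n₀ ≤ k → n₀ ≤ k - j →
      μ (A j ∩ A k) ≤ c * μ (A j) * μ (A (k - j)))
    (hsum : (∑' n : ℕ, μ (A n)) = ⊤) (m : ℕ) (hm : n₀ ≤ m) :
    (4 * c)⁻¹ ≤ μ (⋃ k ∈ Set.Ici m, A k) := by
  classical
  set C : ℝ≥0∞ := ∑ i ∈ Finset.Ico n₀ m, μ (A i) with hC_def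
  have hC : C ≠ ⊤ := (ENNReal.sum_lt_top.mpr fun i _ => measure_lt_top μ _).ne
  set K : ℝ≥0∞ := 2 * c * C + (2 * (n₀ : ℝ≥0∞) + 1) with hK_def
  have hK : K ≠ ⊤ := by
    refine ENNReal.add_ne_top.mpr ⟨ENNReal.mul_ne_top (ENNReal.mul_ne_top ?_ hc') hC, ?_⟩
    · exact ENNReal.ofNat_ne_top
    · exact ENNReal.add_ne_top.mpr ⟨ENNReal.mul_ne_top ENNReal.ofNat_ne_top
        (ENNReal.natCast_ne_top n₀), ENNReal.one_ne_top⟩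
  have h2c0 : (2 : ℝ≥0∞) * c ≠ 0 := by
    simp [hc.ne']
  have h2ct : (2 : ℝ≥0∞) * c ≠ ⊤ := ENNReal.mul_ne_top ENNReal.ofNat_ne_top hc'
  -- choose n with large partial sum
  have htail : ∃ n, m ≤ n ∧ K / (2 * c) + 1 < ∑ k ∈ Finset.Icc m n, μ (A k) := by
    have h1 : (∑' k : ℕ, μ (A (k + m))) = ⊤ := by
      by_contra h
      have h2 := Summable.sum_add_tsum_nat_add' (f := fun k => μ (A k)) (k := m) ENNReal.summable
      rw [hsum] at h2
      exact (ENNReal.add_ne_top.mpr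
        ⟨(ENNReal.sum_lt_top.mpr fun i _ => measure_lt_top μ _).ne, h⟩) h2
    have ht : K / (2 * c) + 1 < ⊤ := by
      refine ENNReal.add_lt_top.mpr ⟨?_, ENNReal.one_lt_top⟩
      exact ENNReal.div_lt_top hK h2c0
    rw [ENNReal.tsum_eq_iSup_nat] at h1
    rw [← h1, lt_iSup_iff] at ht
    obtain ⟨N, hN⟩ := ht
    refine ⟨m + N, Nat.le_add_right _ _, lt_of_lt_of_le hN ?_⟩
    have heq : ∑ i ∈ Finset.range N, μ (A (i + m)) = ∑ k ∈ Finset.Ico m (m + N), μ (A k) := by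
      rw [Finset.sum_Ico_eq_sum_range, Nat.add_sub_cancel_left]
      exact Finset.sum_congr rfl fun i _ => by rw [Nat.add_comm]
    rw [heq]
    apply Finset.sum_le_sum_of_subset
    intro k hk
    simp only [Finset.mem_Ico, Finset.mem_Icc] at hk ⊢
    omega
  obtain ⟨n, hmn, hSbig⟩ := htail
  set T : Finset ℕ := Finset.Icc m n with hT_def
  set S : ℝ≥0∞ := ∑ k ∈ T, μ (A k) with hS_def
  set S' : ℝ≥0∞ := ∑ i ∈ Finset.Icc n₀ n, μ (A i) with hS'_def
  set Q : ℝ≥0∞ := ∑ j ∈ T, ∑ k ∈ T, μ (A j ∩ A k) with hQ_def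
  set U : Set Ω := ⋃ k ∈ T, A k with hU_def
  have hU : MeasurableSet U := T.measurableSet_biUnion fun k _ => hA k
  -- basic facts about S
  have hS1 : 1 ≤ S := le_of_lt (lt_of_le_of_lt le_add_self hSbig)
  have hS0 : S ≠ 0 := fun h => by simp [h] at hS1
  have hStop : S ≠ ⊤ := (ENNReal.sum_lt_top.mpr fun i _ => measure_lt_top μ _).ne
  have hKS : K ≤ 2 * c * S := by
    have : K / (2 * c) < S := lt_of_le_of_lt le_self_add hSbig
    have := (ENNReal.div_lt_iff (Or.inl h2c0) (Or.inl h2ct)).mp this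
    calc K ≤ S * (2 * c) := this.le
    _ = 2 * c * S := by ring
  -- S' = C + S
  have hS' : S' = C + S := by
    rw [hS'_def, hC_def, hS_def, hT_def, show Finset.Icc n₀ n = Finset.Ico n₀ (n+1) from
      (Finset.Ico_add_one_right_eq_Icc n₀ n).symm, show Finset.Icc m n = Finset.Ico m (n+1) from
      (Finset.Ico_add_one_right_eq_Icc m n).symm]
    exact (Finset.sum_Ico_consecutive _ hm (by omega)).symm
  -- indicator function
  set f : Ω → ℝ≥0∞ := fun ω => ∑ k ∈ T, (A k).indicator (1 : Ω → ℝ≥0∞) ω with hf_def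
  have hmeas_ind : ∀ s : Set Ω, MeasurableSet s →
      Measurable (s.indicator (1 : Ω → ℝ≥0∞)) := fun s hs => measurable_const.indicator hs
  have hfmeas : Measurable f := by
    rw [hf_def]
    exact Finset.measurable_sum _ fun k _ => hmeas_ind _ (hA k)
  have hInt1 : ∫⁻ ω, f ω ∂μ = S := by
    simp only [hf_def]
    rw [lintegral_finset_sum (μ := μ) T
      (f := fun k => (A k).indicator (1 : Ω → ℝ≥0∞)) (fun k _ => hmeas_ind _ (hA k))]
    exact Finset.sum_congr rfl fun k _ => lintegral_indicator_one (hA k)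
  have hInt2 : ∫⁻ ω, f ω ^ 2 ∂μ = Q := by
    have hpt : ∀ ω, f ω ^ 2 = ∑ j ∈ T, ∑ k ∈ T, ((A j ∩ A k).indicator (1 : Ω → ℝ≥0∞)) ω := by
      intro ω
      rw [sq, hf_def, Finset.sum_mul_sum]
      refine Finset.sum_congr rfl fun j _ => Finset.sum_congr rfl fun k _ => ?_
      by_cases hj : ω ∈ A j <;> by_cases hk : ω ∈ A k <;>
        simp [Set.indicator_apply, hj, hk, Set.mem_inter_iff]
    simp only [hpt]
    rw [lintegral_finset_sum (μ := μ) T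
      (f := fun j ω => ∑ k ∈ T, (A j ∩ A k).indicator (1 : Ω → ℝ≥0∞) ω)
      (fun j _ => Finset.measurable_sum _ fun k _ => hmeas_ind _ ((hA j).inter (hA k)))]
    refine Finset.sum_congr rfl fun j _ => ?_
    rw [lintegral_finset_sum (μ := μ) T
      (f := fun k => (A j ∩ A k).indicator (1 : Ω → ℝ≥0∞))
      (fun k _ => hmeas_ind _ ((hA j).inter (hA k)))]
    exact Finset.sum_congr rfl fun k _ => lintegral_indicator_one ((hA j).inter (hA k))
  -- Cauchy-Schwarz
  have hCS : S ^ 2 ≤ Q * μ U := by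
    set g : Ω → ℝ≥0∞ := U.indicator (1 : Ω → ℝ≥0∞) with hg_def
    have hgmeas : Measurable g := measurable_const.indicator hU
    have hfg : f = f * g := by
      funext ω
      by_cases hω : ω ∈ U
      · simp [hg_def, Set.indicator_of_mem hω]
      · have : f ω = 0 := Finset.sum_eq_zero fun k hk =>
          Set.indicator_of_notMem (fun h => hω (Set.mem_iUnion₂.mpr ⟨k, hk, h⟩)) 1
        simp [this]
    have hg2 : ∫⁻ ω, g ω ^ (2:ℝ) ∂μ = μ U := by
      have : ∀ ω, g ω ^ (2:ℝ) = g ω := by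
        intro ω
        by_cases h : ω ∈ U <;> simp [hg_def, Set.indicator_apply, h]
      simp only [this]
      exact lintegral_indicator_one hU
    have hf2 : ∀ ω, f ω ^ (2:ℝ) = f ω ^ 2 := by
      intro ω
      rw [← ENNReal.rpow_natCast (f ω) 2]
      norm_num
    have h1 : S ≤ Q ^ (1/(2:ℝ)) * (μ U) ^ (1/(2:ℝ)) := by
      calc S = ∫⁻ ω, f ω ∂μ := hInt1.symm
      _ = ∫⁻ ω, (f * g) ω ∂μ := by rw [← hfg]
      _ ≤ (∫⁻ ω, f ω ^ (2:ℝ) ∂μ) ^ (1/(2:ℝ)) * (∫⁻ ω, g ω ^ (2:ℝ) ∂μ) ^ (1/(2:ℝ)) :=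
        ENNReal.lintegral_mul_le_Lp_mul_Lq μ Real.HolderConjugate.two_two
          hfmeas.aemeasurable hgmeas.aemeasurable
      _ = Q ^ (1/(2:ℝ)) * (μ U) ^ (1/(2:ℝ)) := by
        rw [hg2]
        congr 1
        rw [show (∫⁻ ω, f ω ^ (2:ℝ) ∂μ) = ∫⁻ ω, f ω ^ 2 ∂μ from lintegral_congr hf2, hInt2]
    calc S ^ 2 ≤ (Q ^ (1/(2:ℝ)) * (μ U) ^ (1/(2:ℝ))) ^ 2 := by gcongr
    _ = Q * μ U := by
      rw [mul_pow, ← ENNReal.rpow_natCast (Q ^ (1/(2:ℝ))) 2,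
        ← ENNReal.rpow_natCast ((μ U) ^ (1/(2:ℝ))) 2, ← ENNReal.rpow_mul, ← ENNReal.rpow_mul]
      norm_num
  -- bound on Q
  have hQbound : Q ≤ 2 * c * S * S' + (2 * (n₀ : ℝ≥0∞) + 1) * S := by
    have hsplit : ∀ j ∈ T, ∑ k ∈ T, μ (A j ∩ A k)
        ≤ c * μ (A j) * S'
          + (∑ k ∈ T, if k + n₀ ≤ j then c * μ (A k) * μ (A (j - k)) else 0)
          + (2 * (n₀ : ℝ≥0∞) + 1) * μ (A j) := by
      intro j hj
      simp only [hT_def, Finset.mem_Icc] at hj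
      rw [← Finset.sum_filter_add_sum_filter_not T (fun k => j + n₀ ≤ k)]
      have hterm1 : ∑ k ∈ T.filter (fun k => j + n₀ ≤ k), μ (A j ∩ A k) ≤ c * μ (A j) * S' := by
        calc ∑ k ∈ T.filter (fun k => j + n₀ ≤ k), μ (A j ∩ A k)
            ≤ ∑ k ∈ T.filter (fun k => j + n₀ ≤ k), c * μ (A j) * μ (A (k - j)) := by
              refine Finset.sum_le_sum fun k hk => ?_
              simp only [Finset.mem_filter, hT_def, Finset.mem_Icc] at hk
              exact hbound j k (by omega) (by omega) (by omega)
        _ = c * μ (A j) * ∑ k ∈ T.filter (fun k => j + n₀ ≤ k), μ (A (k - j)) := by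
              rw [Finset.mul_sum]
        _ ≤ c * μ (A j) * S' := by
              gcongr
              exact shiftSumLe μ A n₀ m n j
      have hterm23 : ∑ k ∈ T.filter (fun k => ¬ (j + n₀ ≤ k)), μ (A j ∩ A k)
          ≤ (∑ k ∈ T, if k + n₀ ≤ j then c * μ (A k) * μ (A (j - k)) else 0)
            + (2 * (n₀ : ℝ≥0∞) + 1) * μ (A j) := by
        rw [← Finset.sum_filter_add_sum_filter_not (T.filter (fun k => ¬ (j + n₀ ≤ k)))
          (fun k => k + n₀ ≤ j)]
        gcongr
        · -- close pairs with k + n₀ ≤ j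
          calc ∑ k ∈ (T.filter (fun k => ¬ (j + n₀ ≤ k))).filter (fun k => k + n₀ ≤ j),
                μ (A j ∩ A k)
              ≤ ∑ k ∈ (T.filter (fun k => ¬ (j + n₀ ≤ k))).filter (fun k => k + n₀ ≤ j),
                c * μ (A k) * μ (A (j - k)) := by
                refine Finset.sum_le_sum fun k hk => ?_
                simp only [Finset.mem_filter, hT_def, Finset.mem_Icc] at hk
                rw [Set.inter_comm]
                exact hbound k j (by omega) (by omega) (by omega)
          _ ≤ ∑ k ∈ T.filter (fun k => k + n₀ ≤ j), c * μ (A k) * μ (A (j - k)) := by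
                apply Finset.sum_le_sum_of_subset
                intro k hk
                simp only [Finset.mem_filter] at hk ⊢
                exact ⟨hk.1.1, hk.2⟩
          _ = ∑ k ∈ T, if k + n₀ ≤ j then c * μ (A k) * μ (A (j - k)) else 0 :=
                Finset.sum_filter _ _
        · -- very close pairs
          calc ∑ k ∈ (T.filter (fun k => ¬ (j + n₀ ≤ k))).filter (fun k => ¬ (k + n₀ ≤ j)),
                μ (A j ∩ A k)
              ≤ ∑ k ∈ (T.filter (fun k => ¬ (j + n₀ ≤ k))).filter (fun k => ¬ (k + n₀ ≤ j)),
                μ (A j) :=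
                Finset.sum_le_sum fun k _ => measure_mono Set.inter_subset_left
          _ = ((T.filter (fun k => ¬ (j + n₀ ≤ k))).filter
                (fun k => ¬ (k + n₀ ≤ j))).card • μ (A j) := Finset.sum_const _
          _ ≤ (2 * n₀ + 1) • μ (A j) := by
                apply smul_le_smul_of_nonneg_right ?_ zero_le
                have hsub : (T.filter (fun k => ¬ (j + n₀ ≤ k))).filter
                    (fun k => ¬ (k + n₀ ≤ j)) ⊆ Finset.Icc (j - n₀) (j + n₀) := by
                  intro k hk
                  simp only [Finset.mem_filter, Finset.mem_Icc] at hk ⊢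
                  omega
                calc ((T.filter (fun k => ¬ (j + n₀ ≤ k))).filter
                    (fun k => ¬ (k + n₀ ≤ j))).card ≤ (Finset.Icc (j - n₀) (j + n₀)).card :=
                      Finset.card_le_card hsub
                _ ≤ 2 * n₀ + 1 := by rw [Nat.card_Icc]; omega
          _ = (2 * (n₀ : ℝ≥0∞) + 1) * μ (A j) := by
                rw [nsmul_eq_mul]
                push_cast
                ring
      calc ∑ k ∈ T.filter (fun k => j + n₀ ≤ k), μ (A j ∩ A k)
            + ∑ k ∈ T.filter (fun k => ¬ (j + n₀ ≤ k)), μ (A j ∩ A k)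
          ≤ c * μ (A j) * S'
            + ((∑ k ∈ T, if k + n₀ ≤ j then c * μ (A k) * μ (A (j - k)) else 0)
              + (2 * (n₀ : ℝ≥0∞) + 1) * μ (A j)) := add_le_add hterm1 hterm23
      _ = _ := by ring
    calc Q ≤ ∑ j ∈ T, (c * μ (A j) * S'
          + (∑ k ∈ T, if k + n₀ ≤ j then c * μ (A k) * μ (A (j - k)) else 0)
          + (2 * (n₀ : ℝ≥0∞) + 1) * μ (A j)) := Finset.sum_le_sum hsplit
    _ = c * S * S' + (∑ j ∈ T, ∑ k ∈ T, if k + n₀ ≤ j then c * μ (A k) * μ (A (j - k)) else 0)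
          + (2 * (n₀ : ℝ≥0∞) + 1) * S := by
        rw [Finset.sum_add_distrib, Finset.sum_add_distrib, ← Finset.sum_mul,
          ← Finset.mul_sum, ← Finset.mul_sum, hS_def]
    _ ≤ c * S * S' + c * S * S' + (2 * (n₀ : ℝ≥0∞) + 1) * S := by
        gcongr
        rw [Finset.sum_comm]
        calc ∑ k ∈ T, ∑ j ∈ T, (if k + n₀ ≤ j then c * μ (A k) * μ (A (j - k)) else 0)
            = ∑ k ∈ T, ∑ j ∈ T.filter (fun j => k + n₀ ≤ j), c * μ (A k) * μ (A (j - k)) :=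
              Finset.sum_congr rfl fun k _ => (Finset.sum_filter _ _).symm
        _ = ∑ k ∈ T, c * μ (A k) * ∑ j ∈ T.filter (fun j => k + n₀ ≤ j), μ (A (j - k)) := by
              exact Finset.sum_congr rfl fun k _ => (Finset.mul_sum _ _ _).symm
        _ ≤ ∑ k ∈ T, c * μ (A k) * S' := by
              refine Finset.sum_le_sum fun k _ => ?_
              gcongr
              exact shiftSumLe μ A n₀ m n k
        _ = c * S * S' := by rw [← Finset.sum_mul, ← Finset.mul_sum, hS_def]
    _ = 2 * c * S * S' + (2 * (n₀ : ℝ≥0∞) + 1) * S := by ring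
  -- conclude
  have hQ4 : Q ≤ 4 * c * S ^ 2 := by
    calc Q ≤ 2 * c * S * S' + (2 * (n₀ : ℝ≥0∞) + 1) * S := hQbound
    _ = 2 * c * S * (C + S) + (2 * (n₀ : ℝ≥0∞) + 1) * S := by rw [hS']
    _ = 2 * c * S ^ 2 + K * S := by rw [hK_def]; ring
    _ ≤ 2 * c * S ^ 2 + (2 * c * S) * S := by gcongr
    _ = 4 * c * S ^ 2 := by ring
  have hfinal : 1 ≤ 4 * c * μ U := by
    have h1 : S ^ 2 ≤ (4 * c * μ U) * S ^ 2 := by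
      calc S ^ 2 ≤ Q * μ U := hCS
      _ ≤ (4 * c * S ^ 2) * μ U := by gcongr
      _ = (4 * c * μ U) * S ^ 2 := by ring
    have hS2 : S ^ 2 ≠ 0 := pow_ne_zero _ hS0
    have hS2t : S ^ 2 ≠ ⊤ := ENNReal.pow_ne_top hStop
    have h1' : 1 * S ^ 2 ≤ (4 * c * μ U) * S ^ 2 := by rw [one_mul]; exact h1
    exact (ENNReal.mul_le_mul_iff_left hS2 hS2t).mp h1'
  have h4c0 : (4 : ℝ≥0∞) * c ≠ 0 := by simp [hc.ne']
  have h4ct : (4 : ℝ≥0∞) * c ≠ ⊤ := ENNReal.mul_ne_top ENNReal.ofNat_ne_top hc'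
  have : (4 * c)⁻¹ ≤ μ U := by
    calc (4 * c)⁻¹ = (4 * c)⁻¹ * 1 := (mul_one _).symm
    _ ≤ (4 * c)⁻¹ * (4 * c * μ U) := mul_le_mul_right hfinal _
    _ = μ U := by rw [← mul_assoc, ENNReal.inv_mul_cancel h4c0 h4ct, one_mul]
  refine this.trans (measure_mono ?_)
  refine Set.iUnion₂_subset fun k hk => Set.subset_iUnion₂ (s := fun k _ => A k) k ?_
  simp only [hT_def, Finset.mem_Icc] at hk
  exact hk.1


/-- Borel–Cantelli variant (consequence of the Kochen–Stone lemma): if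
`P(A_j ∩ A_k) ≤ c P(A_j) P(A_{k-j})` for all `j, k ≥ n₀` with `k - j ≥ n₀`,
then `P(A_n i.o.) > 0` iff `∑ P(A_n) = ∞`. -/
theorem stmt3 {Ω : Type*} [MeasurableSpace Ω] (μ : Measure Ω) [IsProbabilityMeasure μ]
    (A : ℕ → Set Ω) (hA : ∀ n, MeasurableSet (A n))
    (n₀ : ℕ) (hn₀ : 1 ≤ n₀) (c : ℝ≥0∞) (hc : 0 < c) (hc' : c ≠ ⊤)
    (hbound : ∀ j k : ℕ, n₀ ≤ j → n₀ ≤ k → n₀ ≤ k - j →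
      μ (A j ∩ A k) ≤ c * μ (A j) * μ (A (k - j))) :
    0 < μ (Filter.limsup A Filter.atTop) ↔ (∑' n : ℕ, μ (A n)) = ⊤ := by
  constructor
  · intro hpos
    by_contra hne
    rw [measure_limsup_atTop_eq_zero hne] at hpos
    exact lt_irrefl 0 hpos
  · intro hsum
    set B : ℕ → Set Ω := fun m => ⋃ k ∈ Set.Ici m, A k with hB_def
    have hlim : Filter.limsup A Filter.atTop = ⋂ m, B m := by
      rw [limsup_eq_iInf_iSup_of_nat]
      rfl
    have hBanti : Antitone B := fun a b hab =>
      Set.biUnion_subset_biUnion_left (Set.Ici_subset_Ici.mpr hab)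
    have hBmeas : ∀ m, NullMeasurableSet (B m) μ := fun m =>
      (MeasurableSet.biUnion (Set.to_countable _) fun k _ => hA k).nullMeasurableSet
    have hdir : Directed (· ⊇ ·) B := fun a b =>
      ⟨max a b, hBanti (le_max_left a b), hBanti (le_max_right a b)⟩
    have hiInf : μ (⋂ m, B m) = ⨅ m, μ (B m) :=
      Directed.measure_iInter hBmeas hdir ⟨0, measure_ne_top μ _⟩
    have hkey : ∀ m, (4 * c)⁻¹ ≤ μ (B m) := fun m =>
      le_trans (keyLemma μ A hA n₀ hn₀ c hc hc' hbound hsum (max n₀ m) (le_max_left _ _))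
        (measure_mono (hBanti (le_max_right n₀ m)))
    have hpos : (0 : ℝ≥0∞) < (4 * c)⁻¹ :=
      ENNReal.inv_pos.mpr (ENNReal.mul_ne_top ENNReal.ofNat_ne_top hc')
    calc (0 : ℝ≥0∞) < (4 * c)⁻¹ := hpos
    _ ≤ μ (Filter.limsup A Filter.atTop) := by
        rw [hlim, hiInf]
        exact le_iInf hkey
end

section
/- Let (X_i) be i.i.d. with symmetric distribution, S_n = X_1 + ⋯ + X_n, and (g_n) an increasing sequence of positive numbers. Then the series ∑_n P(g_n|S_n| < M) is either infinite for all M > 0 or finite for all M > 0. -/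
open MeasureTheory ProbabilityTheory Filter Set
open scoped ENNReal

section AuxLemmas

private lemma amgm2 (a b : ℝ≥0∞) : 2 * (a * b) ≤ a ^ 2 + b ^ 2 := by
  rcases le_total a b with h | h
  · obtain ⟨d, rfl⟩ := exists_add_of_le h
    have h1 : 2 * (a * (a + d)) = a ^ 2 + (a ^ 2 + 2 * a * d) := by ring
    have h2 : (a + d) ^ 2 = a ^ 2 + 2 * a * d + d ^ 2 := by ring
    rw [h1, h2]
    exact add_le_add_right (le_add_right le_rfl) _
  · obtain ⟨d, rfl⟩ := exists_add_of_le h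
    have h1 : 2 * ((b + d) * b) = b ^ 2 + (b ^ 2 + 2 * b * d) := by ring
    have h2 : (b + d) ^ 2 = b ^ 2 + 2 * b * d + d ^ 2 := by ring
    rw [h1, h2]
    calc b ^ 2 + (b ^ 2 + 2 * b * d) ≤ (b ^ 2 + 2 * b * d + d ^ 2) + b ^ 2 := by
          rw [add_comm]
          exact add_le_add_left (le_add_right le_rfl) _

private lemma shiftSum (a : ℤ → ℝ≥0∞) (j : ℤ) :
    ∑' i : ℤ, a i * a (j - i) ≤ ∑' i : ℤ, a i ^ 2 := by
  have key : 2 * ∑' i : ℤ, a i * a (j - i) ≤ 2 * ∑' i : ℤ, a i ^ 2 := by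
    rw [← ENNReal.tsum_mul_left]
    calc ∑' i : ℤ, 2 * (a i * a (j - i))
        ≤ ∑' i : ℤ, (a i ^ 2 + a (j - i) ^ 2) := ENNReal.tsum_le_tsum fun i => amgm2 _ _
      _ = (∑' i : ℤ, a i ^ 2) + ∑' i : ℤ, a (j - i) ^ 2 := ENNReal.tsum_add
      _ = (∑' i : ℤ, a i ^ 2) + ∑' i : ℤ, a i ^ 2 := by
          congr 1
          exact (Equiv.subLeft j).tsum_eq (fun i => a i ^ 2)
      _ = 2 * ∑' i : ℤ, a i ^ 2 := by ring
  exact (ENNReal.mul_le_mul_iff_right (by norm_num) (by norm_num)).1 key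

variable {Ω : Type*} [MeasurableSpace Ω]

/-- The key concentration lemma: if `Z = U + V` with `U, V` i.i.d. with symmetric law, then
any interval of length `l` carries at most `3` times the mass of the centered window `(-l, l)`. -/
private lemma cellBound (μ : Measure Ω) [IsProbabilityMeasure μ]
    (U V : Ω → ℝ) (hU : Measurable U) (hV : Measurable V)
    (hUV : IndepFun U V μ) (hid : μ.map V = μ.map U)
    (hsymm : (μ.map U).map Neg.neg = μ.map U)
    {l : ℝ} (hl : 0 < l) (y : ℝ) :
    μ {ω | U ω + V ω ∈ Ico y (y + l)} ≤ 3 * μ {ω | |U ω + V ω| < l} := by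
  classical
  have hcmeas : ∀ i : ℤ, MeasurableSet (Ico ((i : ℝ) * l) ((i : ℝ) * l + l)) :=
    fun i => measurableSet_Ico
  set c : ℤ → Set ℝ := fun i => Ico ((i : ℝ) * l) ((i : ℝ) * l + l) with hc
  set a : ℤ → ℝ≥0∞ := fun i => μ (U ⁻¹' c i) with ha
  have haV : ∀ i : ℤ, μ (V ⁻¹' c i) = a i := by
    intro i
    have h1 : μ (V ⁻¹' c i) = (μ.map V) (c i) := (Measure.map_apply hV (hcmeas i)).symm
    have h2 : (μ.map U) (c i) = μ (U ⁻¹' c i) := Measure.map_apply hU (hcmeas i)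
    rw [h1, hid, h2]
  set d : ℤ → Set ℝ := fun i => Ioc (-((i : ℝ) * l) - l) (-((i : ℝ) * l)) with hd
  have hdmeas : ∀ i : ℤ, MeasurableSet (d i) := fun i => measurableSet_Ioc
  have haV' : ∀ i : ℤ, μ (V ⁻¹' d i) = a i := by
    intro i
    have h1 : μ (V ⁻¹' d i) = (μ.map V) (d i) := (Measure.map_apply hV (hdmeas i)).symm
    have h2 : ((μ.map U).map Neg.neg) (d i) = (μ.map U) (Neg.neg ⁻¹' (d i)) :=
      Measure.map_apply measurable_neg (hdmeas i)
    have h4 : Neg.neg ⁻¹' (d i) = c i := by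
      ext x
      simp only [hd, hc, mem_preimage, mem_Ioc, mem_Ico]
      constructor
      · rintro ⟨h5, h6⟩; constructor <;> linarith
      · rintro ⟨h5, h6⟩; constructor <;> linarith
    have h3 : (μ.map U) (c i) = μ (U ⁻¹' c i) := Measure.map_apply hU (hcmeas i)
    rw [h1, hid, ← hsymm, h2, h4, h3]
  set m : ℤ := ⌊y / l⌋ with hm
  set T : Set Ω := {ω | U ω + V ω ∈ Ico y (y + l)} with hT
  have cover : T ⊆ ⋃ i : ℤ, (U ⁻¹' c i ∩ T) := by
    intro ω hω
    refine mem_iUnion.2 ⟨⌊U ω / l⌋, ⟨?_, hω⟩⟩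
    simp only [hc, mem_preimage, mem_Ico]
    constructor
    · rw [← le_div_iff₀ hl]; exact Int.floor_le _
    · have h5 := Int.lt_floor_add_one (U ω / l)
      rw [div_lt_iff₀ hl] at h5
      linarith
  have step1 : μ T ≤ ∑' i : ℤ, μ (U ⁻¹' c i ∩ T) :=
    le_trans (measure_mono cover) (measure_iUnion_le _)
  have step2 : ∀ i : ℤ, μ (U ⁻¹' c i ∩ T) ≤
      a i * a (m - 1 - i) + a i * a (m - i) + a i * a (m + 1 - i) := by
    intro i
    have hsub : U ⁻¹' c i ∩ T ⊆
        (U ⁻¹' c i ∩ V ⁻¹' c (m - 1 - i)) ∪ (U ⁻¹' c i ∩ V ⁻¹' c (m - i)) ∪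
          (U ⁻¹' c i ∩ V ⁻¹' c (m + 1 - i)) := by
      rintro ω ⟨hωU, hωT⟩
      have hωU' : (i : ℝ) * l ≤ U ω ∧ U ω < (i : ℝ) * l + l := by
        simpa only [hc, mem_preimage, mem_Ico] using hωU
      have hωT' : y ≤ U ω + V ω ∧ U ω + V ω < y + l := by
        simpa only [hT, mem_setOf_eq, mem_Ico] using hωT
      have hml : (m : ℝ) * l ≤ y := by
        rw [← le_div_iff₀ hl]; exact Int.floor_le _
      have hml' : y < (m : ℝ) * l + l := by
        have h5 := Int.lt_floor_add_one (y / l)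
        rw [div_lt_iff₀ hl] at h5; linarith
      set j : ℤ := ⌊V ω / l⌋ with hj
      have hjV : V ω ∈ c j := by
        simp only [hc, mem_Ico]
        constructor
        · rw [← le_div_iff₀ hl]; exact Int.floor_le _
        · have h5 := Int.lt_floor_add_one (V ω / l)
          rw [div_lt_iff₀ hl] at h5; linarith
      have hlow : ((m - 1 - i : ℤ) : ℝ) ≤ V ω / l := by
        rw [le_div_iff₀ hl]
        push_cast
        nlinarith [hωT'.1, hωU'.2]
      have hhigh : V ω / l < ((m - i + 2 : ℤ) : ℝ) := by
        rw [div_lt_iff₀ hl]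
        push_cast
        nlinarith [hωT'.2, hωU'.1]
      have hjlow : m - 1 - i ≤ j := by
        rw [hj, Int.le_floor]; exact hlow
      have hjhigh : j ≤ m + 1 - i := by
        have h6 : (j : ℝ) ≤ V ω / l := Int.floor_le _
        have h7 : (j : ℝ) < ((m - i + 2 : ℤ) : ℝ) := lt_of_le_of_lt h6 hhigh
        have h8 : j < m - i + 2 := by exact_mod_cast h7
        omega
      have hcases : j = m - 1 - i ∨ j = m - i ∨ j = m + 1 - i := by omega
      rcases hcases with h9 | h9 | h9
      · exact Or.inl (Or.inl ⟨hωU, by rw [← h9]; exact hjV⟩)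
      · exact Or.inl (Or.inr ⟨hωU, by rw [← h9]; exact hjV⟩)
      · exact Or.inr ⟨hωU, by rw [← h9]; exact hjV⟩
    have hprod : ∀ j : ℤ, μ (U ⁻¹' c i ∩ V ⁻¹' c j) = a i * a j := by
      intro j
      rw [hUV.measure_inter_preimage_eq_mul (c i) (c j) (hcmeas i) (hcmeas j), haV j]
    calc μ (U ⁻¹' c i ∩ T)
        ≤ μ ((U ⁻¹' c i ∩ V ⁻¹' c (m - 1 - i)) ∪ (U ⁻¹' c i ∩ V ⁻¹' c (m - i)) ∪
            (U ⁻¹' c i ∩ V ⁻¹' c (m + 1 - i))) := measure_mono hsub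
      _ ≤ μ ((U ⁻¹' c i ∩ V ⁻¹' c (m - 1 - i)) ∪ (U ⁻¹' c i ∩ V ⁻¹' c (m - i))) +
            μ (U ⁻¹' c i ∩ V ⁻¹' c (m + 1 - i)) := measure_union_le _ _
      _ ≤ (μ (U ⁻¹' c i ∩ V ⁻¹' c (m - 1 - i)) + μ (U ⁻¹' c i ∩ V ⁻¹' c (m - i))) +
            μ (U ⁻¹' c i ∩ V ⁻¹' c (m + 1 - i)) :=
          add_le_add_left (measure_union_le _ _) _
      _ = a i * a (m - 1 - i) + a i * a (m - i) + a i * a (m + 1 - i) := by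
          rw [hprod, hprod, hprod]
  have step3 : ∑' i : ℤ, a i ^ 2 ≤ μ {ω | |U ω + V ω| < l} := by
    have hDdisj : Pairwise (Function.onFun Disjoint (fun i : ℤ => U ⁻¹' c i ∩ V ⁻¹' d i)) := by
      intro i j hij
      refine Disjoint.mono (inter_subset_left) (inter_subset_left) ?_
      rw [Set.disjoint_left]
      intro x hxi hxj
      simp only [hc, mem_preimage, mem_Ico] at hxi hxj
      rcases lt_or_gt_of_ne hij with h | h
      · have : ((i : ℝ) + 1) ≤ (j : ℝ) := by exact_mod_cast h
        nlinarith [hxi.2, hxj.1]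
      · have : ((j : ℝ) + 1) ≤ (i : ℝ) := by exact_mod_cast h
        nlinarith [hxj.2, hxi.1]
    have hDmeas : ∀ i : ℤ, MeasurableSet (U ⁻¹' c i ∩ V ⁻¹' d i) := fun i =>
      (hU (hcmeas i)).inter (hV (hdmeas i))
    have hDsub : (⋃ i : ℤ, (U ⁻¹' c i ∩ V ⁻¹' d i)) ⊆ {ω | |U ω + V ω| < l} := by
      rintro ω hω
      obtain ⟨i, hωi⟩ := mem_iUnion.1 hω
      obtain ⟨h1, h2⟩ := hωi
      simp only [hc, mem_preimage, mem_Ico] at h1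
      simp only [hd, mem_preimage, mem_Ioc] at h2
      simp only [mem_setOf_eq, abs_lt]
      constructor <;> linarith [h1.1, h1.2, h2.1, h2.2]
    calc ∑' i : ℤ, a i ^ 2
        = ∑' i : ℤ, μ (U ⁻¹' c i ∩ V ⁻¹' d i) := by
          refine tsum_congr fun i => ?_
          rw [hUV.measure_inter_preimage_eq_mul (c i) (d i) (hcmeas i) (hdmeas i), haV' i]
          ring
      _ = μ (⋃ i : ℤ, (U ⁻¹' c i ∩ V ⁻¹' d i)) := (measure_iUnion hDdisj hDmeas).symm
      _ ≤ μ {ω | |U ω + V ω| < l} := measure_mono hDsub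
  calc μ T ≤ ∑' i : ℤ, μ (U ⁻¹' c i ∩ T) := step1
    _ ≤ ∑' i : ℤ, (a i * a (m - 1 - i) + a i * a (m - i) + a i * a (m + 1 - i)) :=
        ENNReal.tsum_le_tsum step2
    _ = (∑' i : ℤ, a i * a (m - 1 - i)) + (∑' i : ℤ, a i * a (m - i)) +
          (∑' i : ℤ, a i * a (m + 1 - i)) := by
        rw [ENNReal.tsum_add, ENNReal.tsum_add]
    _ ≤ (∑' i : ℤ, a i ^ 2) + (∑' i : ℤ, a i ^ 2) + (∑' i : ℤ, a i ^ 2) :=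
        add_le_add (add_le_add (shiftSum a (m - 1)) (shiftSum a m)) (shiftSum a (m + 1))
    _ = 3 * (∑' i : ℤ, a i ^ 2) := by ring
    _ ≤ 3 * μ {ω | |U ω + V ω| < l} := mul_le_mul_right step3 3

private lemma coverBound (μ : Measure Ω) [IsProbabilityMeasure μ]
    (U V : Ω → ℝ)
    {l : ℝ} (hl : 0 < l) (L : ℝ) (N : ℕ) (hN : 2 * L ≤ N * l) (w : ℝ)
    (cell : ∀ y : ℝ, μ {ω | U ω + V ω ∈ Ico y (y + l)} ≤ 3 * μ {ω | |U ω + V ω| < l}) :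
    μ {ω | U ω + V ω ∈ Ioo w (w + 2 * L)} ≤ 3 * N * μ {ω | |U ω + V ω| < l} := by
  classical
  have hsub : {ω | U ω + V ω ∈ Ioo w (w + 2 * L)} ⊆
      ⋃ j ∈ Finset.range N, {ω | U ω + V ω ∈ Ico (w + j * l) (w + j * l + l)} := by
    intro ω hω
    simp only [mem_setOf_eq, mem_Ioo] at hω
    set x : ℝ := U ω + V ω with hx
    have hx0 : 0 ≤ (x - w) / l := div_nonneg (by linarith [hω.1]) (le_of_lt hl)
    set j : ℕ := ⌊(x - w) / l⌋₊ with hj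
    have hj1 : (j : ℝ) ≤ (x - w) / l := Nat.floor_le hx0
    have hj2 : (x - w) / l < j + 1 := Nat.lt_floor_add_one _
    have hjN : j < N := by
      have h3 : (x - w) / l < (N : ℝ) := by
        rw [div_lt_iff₀ hl]
        calc x - w < 2 * L := by linarith [hω.2]
          _ ≤ N * l := hN
      have h4 : (j : ℝ) < (N : ℝ) := lt_of_le_of_lt hj1 h3
      exact_mod_cast h4
    refine mem_biUnion (Finset.mem_range.2 hjN) ?_
    simp only [mem_setOf_eq, mem_Ico]
    rw [le_div_iff₀ hl] at hj1
    rw [div_lt_iff₀ hl] at hj2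
    constructor
    · nlinarith
    · nlinarith
  calc μ {ω | U ω + V ω ∈ Ioo w (w + 2 * L)}
      ≤ ∑ j ∈ Finset.range N, μ {ω | U ω + V ω ∈ Ico (w + j * l) (w + j * l + l)} :=
        le_trans (measure_mono hsub) (measure_biUnion_finset_le _ _)
    _ ≤ ∑ _j ∈ Finset.range N, 3 * μ {ω | |U ω + V ω| < l} :=
        Finset.sum_le_sum fun j _ => cell (w + j * l)
    _ = N * (3 * μ {ω | |U ω + V ω| < l}) := by
        rw [Finset.sum_const, Finset.card_range, nsmul_eq_mul]
    _ = 3 * N * μ {ω | |U ω + V ω| < l} := by ring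

private lemma map_add_of_indep (μ : Measure Ω) [IsProbabilityMeasure μ]
    (f g : Ω → ℝ) (hf : Measurable f) (hg : Measurable g) (h : IndepFun f g μ) :
    μ.map (fun ω => f ω + g ω)
      = ((μ.map f).prod (μ.map g)).map (fun p : ℝ × ℝ => p.1 + p.2) := by
  have hpair : μ.map (fun ω => (f ω, g ω)) = (μ.map f).prod (μ.map g) :=
    (indepFun_iff_map_prod_eq_prod_map_map hf.aemeasurable hg.aemeasurable).1 h
  rw [← hpair, Measure.map_map measurable_add (hf.prodMk hg)]
  rfl

private lemma indep_block {μ : Measure Ω} (X : ℕ → Ω → ℝ)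
    (hmeas : ∀ i, Measurable (X i))
    (hindep : iIndepFun X μ)
    (s t : Finset ℕ) (hst : Disjoint s t) :
    IndepFun (fun ω => ∑ i ∈ s, X i ω) (fun ω => ∑ i ∈ t, X i ω) μ := by
  have h := iIndepFun.indepFun_finset s t hst hindep hmeas
  have hφ : ∀ u : Finset ℕ, Measurable (fun v : u → ℝ => ∑ i, v i) := by
    intro u
    exact Finset.measurable_sum _ (fun i _ => measurable_pi_apply i)
  have h2 := h.comp (hφ s) (hφ t)
  have e1 : ((fun v : s → ℝ => ∑ i, v i) ∘ (fun ω (i : s) => X i ω))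
      = fun ω => ∑ i ∈ s, X i ω := by
    funext ω
    simp only [Function.comp_apply]
    exact Finset.sum_coe_sort s (fun i => X i ω)
  have e2 : ((fun v : t → ℝ => ∑ i, v i) ∘ (fun ω (i : t) => X i ω))
      = fun ω => ∑ i ∈ t, X i ω := by
    funext ω
    simp only [Function.comp_apply]
    exact Finset.sum_coe_sort t (fun i => X i ω)
  rwa [e1, e2] at h2

private lemma sum_meas (X : ℕ → Ω → ℝ) (hmeas : ∀ i, Measurable (X i))
    (s : Finset ℕ) : Measurable (fun ω => ∑ i ∈ s, X i ω) :=
  Finset.measurable_sum s (fun i _ => hmeas i)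

private lemma blockLaw (μ : Measure Ω) [IsProbabilityMeasure μ]
    (X : ℕ → Ω → ℝ) (hmeas : ∀ i, Measurable (X i))
    (hindep : iIndepFun X μ)
    (hident : ∀ i, IdentDistrib (X i) (X 0) μ μ) :
    ∀ (j m : ℕ), μ.map (fun ω => ∑ i ∈ Finset.Ico m (m + j), X i ω)
      = μ.map (fun ω => ∑ i ∈ Finset.range j, X i ω) := by
  intro j
  induction j with
  | zero => intro m; simp
  | succ j ih =>
    intro m
    have hdisj1 : Disjoint (Finset.Ico m (m + j)) ({m + j} : Finset ℕ) := by
      simp [Finset.disjoint_singleton_right]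
    have hdisj2 : Disjoint (Finset.range j) ({j} : Finset ℕ) := by
      simp [Finset.disjoint_singleton_right]
    have hind1 : IndepFun (fun ω => ∑ i ∈ Finset.Ico m (m + j), X i ω) (X (m + j)) μ := by
      have h := indep_block X hmeas hindep _ _ hdisj1
      simpa using h
    have hind2 : IndepFun (fun ω => ∑ i ∈ Finset.range j, X i ω) (X j) μ := by
      have h := indep_block X hmeas hindep _ _ hdisj2
      simpa using h
    have e1 : (fun ω => ∑ i ∈ Finset.Ico m (m + (j + 1)), X i ω)
        = fun ω => (∑ i ∈ Finset.Ico m (m + j), X i ω) + X (m + j) ω := by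
      funext ω
      rw [show m + (j + 1) = (m + j) + 1 by ring,
        Finset.sum_Ico_succ_top (Nat.le_add_right m j)]
    have e2 : (fun ω => ∑ i ∈ Finset.range (j + 1), X i ω)
        = fun ω => (∑ i ∈ Finset.range j, X i ω) + X j ω := by
      funext ω
      rw [Finset.sum_range_succ]
    rw [e1, e2,
      map_add_of_indep μ _ _ (sum_meas X hmeas _) (hmeas _) hind1,
      map_add_of_indep μ _ _ (sum_meas X hmeas _) (hmeas _) hind2,
      ih m, (hident (m + j)).map_eq, ← (hident j).map_eq]

private lemma negLaw (μ : Measure Ω) [IsProbabilityMeasure μ]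
    (X : ℕ → Ω → ℝ) (hmeas : ∀ i, Measurable (X i))
    (hindep : iIndepFun X μ)
    (hident : ∀ i, IdentDistrib (X i) (X 0) μ μ)
    (hsym : Measure.map (X 0) μ = Measure.map (fun ω => -X 0 ω) μ) :
    ∀ j : ℕ, μ.map (fun ω => -(∑ i ∈ Finset.range j, X i ω))
      = μ.map (fun ω => ∑ i ∈ Finset.range j, X i ω) := by
  have hmapnegX : ∀ i : ℕ, μ.map (fun ω => -(X i ω)) = μ.map (X i) := by
    intro i
    have h1 : μ.map (fun ω => -(X i ω)) = (μ.map (X i)).map Neg.neg := by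
      rw [Measure.map_map measurable_neg (hmeas i)]; rfl
    have h2 : μ.map (fun ω => -(X 0 ω)) = (μ.map (X 0)).map Neg.neg := by
      rw [Measure.map_map measurable_neg (hmeas 0)]; rfl
    rw [h1, (hident i).map_eq, ← h2, ← hsym]
  intro j
  induction j with
  | zero => simp
  | succ j ih =>
    have hdisj2 : Disjoint (Finset.range j) ({j} : Finset ℕ) := by
      simp [Finset.disjoint_singleton_right]
    have hind2 : IndepFun (fun ω => ∑ i ∈ Finset.range j, X i ω) (X j) μ := by
      have h := indep_block X hmeas hindep _ _ hdisj2
      simpa using h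
    have hind2' : IndepFun (fun ω => -(∑ i ∈ Finset.range j, X i ω)) (fun ω => -(X j ω)) μ :=
      hind2.comp measurable_neg measurable_neg
    have e1 : (fun ω => -(∑ i ∈ Finset.range (j + 1), X i ω))
        = fun ω => (-(∑ i ∈ Finset.range j, X i ω)) + (-(X j ω)) := by
      funext ω
      rw [Finset.sum_range_succ]
      ring
    have e2 : (fun ω => ∑ i ∈ Finset.range (j + 1), X i ω)
        = fun ω => (∑ i ∈ Finset.range j, X i ω) + X j ω := by
      funext ω
      rw [Finset.sum_range_succ]
    rw [e1, e2,
      map_add_of_indep μ (fun ω => -(∑ i ∈ Finset.range j, X i ω)) (fun ω => -(X j ω))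
        (sum_meas X hmeas _).neg (hmeas _).neg hind2',
      map_add_of_indep μ _ _ (sum_meas X hmeas _) (hmeas _) hind2,
      ih, hmapnegX j]

end AuxLemmas

/-- Dichotomy: for a random walk with i.i.d. symmetric steps and `(g_n)` increasing positive,
the series `∑ P(g_n |S_n| < M)` is either infinite for all `M > 0` or finite for all `M > 0`. -/
theorem stmt6 {Ω : Type*} [MeasurableSpace Ω] (μ : Measure Ω) [IsProbabilityMeasure μ]
    (X : ℕ → Ω → ℝ) (hmeas : ∀ i, Measurable (X i))
    (hindep : iIndepFun X μ)
    (hident : ∀ i, IdentDistrib (X i) (X 0) μ μ)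
    (hsym : Measure.map (X 0) μ = Measure.map (fun ω => -X 0 ω) μ)
    (S : ℕ → Ω → ℝ) (hS : ∀ n ω, S n ω = ∑ i ∈ Finset.range n, X i ω)
    (g : ℕ → ℝ) (hg : ∀ n, 0 < g n) (hmono : Monotone g) :
    (∀ M : ℝ, 0 < M → (∑' n : ℕ, μ {ω | g n * |S n ω| < M}) = ⊤) ∨
    (∀ M : ℝ, 0 < M → (∑' n : ℕ, μ {ω | g n * |S n ω| < M}) ≠ ⊤) := by
  classical
  by_cases H : ∀ M : ℝ, 0 < M → (∑' n : ℕ, μ {ω | g n * |S n ω| < M}) = ⊤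
  · exact Or.inl H
  right
  push_neg at H
  obtain ⟨M₀, hM₀, hfin⟩ := H
  intro M hM
  have hSfun : ∀ n, S n = fun ω => ∑ i ∈ Finset.range n, X i ω := fun n => funext (hS n)
  have hSm : ∀ n, Measurable (S n) := fun n => by
    rw [hSfun n]; exact sum_meas X hmeas _
  set N : ℕ := ⌈2 * M / M₀⌉₊ + 1 with hNdef
  -- the key index-wise comparison
  have key : ∀ n : ℕ, μ {ω | g n * |S n ω| < M}
      ≤ 3 * N * μ {ω | g (2 * (n / 2)) * |S (2 * (n / 2)) ω| < M₀} := by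
    intro n
    set k : ℕ := n / 2 with hk
    set U : Ω → ℝ := S k with hU
    set V : Ω → ℝ := fun ω => S (2 * k) ω - S k ω with hV
    have hUm : Measurable U := hSm k
    have hVfun : V = fun ω => ∑ i ∈ Finset.Ico k (2 * k), X i ω := by
      funext ω
      show S (2 * k) ω - S k ω = _
      rw [hS, hS, eq_comm, show 2 * k = k + k by ring]
      exact Finset.sum_Ico_eq_sub _ (Nat.le_add_right k k)
    have hVm : Measurable V := by rw [hVfun]; exact sum_meas X hmeas _
    have hUVindep : IndepFun U V μ := by
      rw [hU, hSfun k, hVfun]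
      refine indep_block X hmeas hindep (Finset.range k) (Finset.Ico k (2 * k)) ?_
      rw [Finset.range_eq_Ico]
      exact Finset.Ico_disjoint_Ico_consecutive 0 k (2 * k)
    have hid : μ.map V = μ.map U := by
      rw [hU, hSfun k, hVfun, show 2 * k = k + k by ring]
      exact blockLaw μ X hmeas hindep hident k k
    have hsymmU : (μ.map U).map Neg.neg = μ.map U := by
      rw [hU, hSfun k]
      have h1 : (μ.map (fun ω => ∑ i ∈ Finset.range k, X i ω)).map Neg.neg
          = μ.map (fun ω => -(∑ i ∈ Finset.range k, X i ω)) := by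
        rw [Measure.map_map measurable_neg (sum_meas X hmeas _)]; rfl
      rw [h1, negLaw μ X hmeas hindep hident hsym k]
    have haddUV : ∀ ω, U ω + V ω = S (2 * k) ω := fun ω => by rw [hU, hV]; ring
    set l : ℝ := M₀ / g (2 * k) with hldef
    have hl : 0 < l := div_pos hM₀ (hg _)
    set L : ℝ := M / g n with hLdef
    have hLpos : 0 < L := div_pos hM (hg n)
    have hcell : ∀ y : ℝ, μ {ω | U ω + V ω ∈ Ico y (y + l)} ≤ 3 * μ {ω | |U ω + V ω| < l} :=
      fun y => cellBound μ U V hUm hVm hUVindep hid hsymmU hl y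
    have h2kn : (2 : ℕ) * k ≤ n := by omega
    have hNl : 2 * L ≤ N * l := by
      have h1 : (2 * M / M₀ : ℝ) ≤ N := by
        calc (2 * M / M₀ : ℝ) ≤ ⌈2 * M / M₀⌉₊ := Nat.le_ceil _
          _ ≤ N := by rw [hNdef]; push_cast; linarith
      have h2 : L ≤ M / g (2 * k) := by
        apply div_le_div_of_nonneg_left (le_of_lt hM) (hg (2 * k)) (hmono h2kn)
      have h3 : 2 * (M / g (2 * k)) = (2 * M / M₀) * l := by
        rw [hldef]
        field_simp
      calc 2 * L ≤ 2 * (M / g (2 * k)) := by linarith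
        _ = (2 * M / M₀) * l := h3
        _ ≤ N * l := mul_le_mul_of_nonneg_right h1 (le_of_lt hl)
    have hcov : ∀ w : ℝ, μ {ω | U ω + V ω ∈ Ioo w (w + 2 * L)}
        ≤ 3 * N * μ {ω | |U ω + V ω| < l} :=
      fun w => coverBound μ U V hl L N hNl w hcell
    have hRHS : {ω | |U ω + V ω| < l} = {ω | g (2 * k) * |S (2 * k) ω| < M₀} := by
      ext ω
      rw [mem_setOf_eq, mem_setOf_eq, haddUV ω]
      have e : g (2 * k) * |S (2 * k) ω| = |S (2 * k) ω| * g (2 * k) := mul_comm _ _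
      constructor
      · intro h
        have h' := (lt_div_iff₀ (hg (2 * k))).1 h
        linarith
      · intro h
        rw [hldef, lt_div_iff₀ (hg (2 * k))]
        linarith
    have hn2 : n = 2 * k ∨ n = 2 * k + 1 := by omega
    rcases hn2 with hne | hno
    · -- even case
      have hLHS : {ω | g n * |S n ω| < M} = {ω | U ω + V ω ∈ Ioo (-L) (-L + 2 * L)} := by
        ext ω
        rw [mem_setOf_eq, mem_setOf_eq, mem_Ioo]
        have e1 : U ω + V ω = S n ω := by rw [haddUV ω, ← hne]
        rw [e1, show -L + 2 * L = L by ring, ← abs_lt]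
        have e : g n * |S n ω| = |S n ω| * g n := mul_comm _ _
        constructor
        · intro h
          rw [hLdef, lt_div_iff₀ (hg n)]
          linarith
        · intro h
          have h' := (lt_div_iff₀ (hg n)).1 h
          linarith
      rw [hLHS, ← hRHS]
      exact hcov (-L)
    · -- odd case
      set W : Ω → ℝ := X (2 * k) with hWdef
      have hWm : Measurable W := hmeas _
      have hSn : ∀ ω, S n ω = S (2 * k) ω + W ω := by
        intro ω
        rw [hno, hS (2 * k + 1) ω, Finset.sum_range_succ, ← hS (2 * k) ω, hWdef]
      have hindepWS : IndepFun W (S (2 * k)) μ := by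
        rw [hWdef, hSfun (2 * k)]
        have h := indep_block X hmeas hindep ({2 * k} : Finset ℕ) (Finset.range (2 * k))
          (by simp)
        simpa using h
      have hLHS : {ω | g n * |S n ω| < M} = {ω | |S (2 * k) ω + W ω| < L} := by
        ext ω
        rw [mem_setOf_eq, mem_setOf_eq, ← hSn ω]
        have e : g n * |S n ω| = |S n ω| * g n := mul_comm _ _
        constructor
        · intro h
          rw [hLdef, lt_div_iff₀ (hg n)]
          linarith
        · intro h
          have h' := (lt_div_iff₀ (hg n)).1 h
          linarith
      have hCmeas : MeasurableSet {p : ℝ × ℝ | |p.2 + p.1| < L} :=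
        measurableSet_lt ((measurable_snd.add measurable_fst).abs) measurable_const
      have hmap : μ {ω | |S (2 * k) ω + W ω| < L}
          = ((μ.map W).prod (μ.map (S (2 * k)))) {p : ℝ × ℝ | |p.2 + p.1| < L} := by
        rw [← (indepFun_iff_map_prod_eq_prod_map_map hWm.aemeasurable
          (hSm (2 * k)).aemeasurable).1 hindepWS]
        rw [Measure.map_apply (hWm.prodMk (hSm (2 * k))) hCmeas]
        congr 1
      have hsec : ∀ x : ℝ, (Prod.mk x ⁻¹' {p : ℝ × ℝ | |p.2 + p.1| < L})
          = Ioo (-x - L) (-x - L + 2 * L) := by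
        intro x
        ext z
        simp only [mem_preimage, mem_setOf_eq, mem_Ioo, abs_lt]
        constructor <;> rintro ⟨h1, h2⟩ <;> constructor <;> linarith
      have hbound : ∀ x : ℝ, (μ.map (S (2 * k))) (Ioo (-x - L) (-x - L + 2 * L))
          ≤ 3 * N * μ {ω | |U ω + V ω| < l} := by
        intro x
        rw [Measure.map_apply (hSm (2 * k)) measurableSet_Ioo]
        have e3 : S (2 * k) ⁻¹' Ioo (-x - L) (-x - L + 2 * L)
            = {ω | U ω + V ω ∈ Ioo (-x - L) (-x - L + 2 * L)} := by
          ext ω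
          rw [mem_preimage, mem_setOf_eq, haddUV ω]
        rw [e3]
        exact hcov (-x - L)
      have hprodle : ((μ.map W).prod (μ.map (S (2 * k)))) {p : ℝ × ℝ | |p.2 + p.1| < L}
          ≤ 3 * N * μ {ω | |U ω + V ω| < l} := by
        rw [Measure.prod_apply hCmeas]
        calc ∫⁻ x, (μ.map (S (2 * k))) (Prod.mk x ⁻¹' {p : ℝ × ℝ | |p.2 + p.1| < L})
              ∂(μ.map W)
            ≤ ∫⁻ _x, 3 * N * μ {ω | |U ω + V ω| < l} ∂(μ.map W) := by
              refine lintegral_mono fun x => ?_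
              rw [hsec x]
              exact hbound x
          _ = 3 * N * μ {ω | |U ω + V ω| < l} := by
              rw [lintegral_const]
              have huniv : (μ.map W) univ = 1 := by
                rw [Measure.map_apply hWm MeasurableSet.univ, preimage_univ, measure_univ]
              rw [huniv, mul_one]
      rw [hLHS, ← hRHS]
      rw [hmap]
      exact hprodle
  -- summing up
  set f : ℕ → ℝ≥0∞ := fun j => μ {ω | g j * |S j ω| < M₀} with hf
  have heven : ∀ j : ℕ, 2 * ((2 * j) / 2) = 2 * j := fun j => by omega
  have hodd : ∀ j : ℕ, 2 * ((2 * j + 1) / 2) = 2 * j := fun j => by omega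
  have hsplit : (∑' n : ℕ, f (2 * (n / 2)))
      = (∑' j : ℕ, f (2 * j)) + (∑' j : ℕ, f (2 * j)) := by
    rw [← tsum_even_add_odd (f := fun n => f (2 * (n / 2))) ENNReal.summable ENNReal.summable]
    congr 1
    · exact tsum_congr fun j => by rw [heven j]
    · exact tsum_congr fun j => by rw [hodd j]
  have hsubsum : (∑' j : ℕ, f (2 * j)) ≤ ∑' j : ℕ, f j :=
    ENNReal.tsum_comp_le_tsum_of_injective (f := fun j : ℕ => 2 * j) (fun a b hab => by dsimp at hab; omega) f
  have htotal : (∑' n : ℕ, μ {ω | g n * |S n ω| < M})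
      ≤ 3 * N * ((∑' j : ℕ, f j) + (∑' j : ℕ, f j)) := by
    calc (∑' n : ℕ, μ {ω | g n * |S n ω| < M})
        ≤ ∑' n : ℕ, 3 * N * f (2 * (n / 2)) := ENNReal.tsum_le_tsum key
      _ = 3 * N * ∑' n : ℕ, f (2 * (n / 2)) := ENNReal.tsum_mul_left
      _ = 3 * N * ((∑' j : ℕ, f (2 * j)) + (∑' j : ℕ, f (2 * j))) := by rw [hsplit]
      _ ≤ 3 * N * ((∑' j : ℕ, f j) + (∑' j : ℕ, f j)) := by
          exact mul_le_mul_right (add_le_add hsubsum hsubsum) _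
  have hfin' : (∑' j : ℕ, f j) ≠ ⊤ := hfin
  have hCne : (3 : ℝ≥0∞) * N ≠ ⊤ :=
    ENNReal.mul_ne_top (by simp) (ENNReal.natCast_ne_top N)
  have hRne : 3 * (N : ℝ≥0∞) * ((∑' j : ℕ, f j) + (∑' j : ℕ, f j)) ≠ ⊤ :=
    ENNReal.mul_ne_top hCne (ENNReal.add_ne_top.2 ⟨hfin', hfin'⟩)
  exact ne_top_of_le_ne_top hRne htotal
end

section
/- Let (X_i) be i.i.d. with symmetric distribution and S_n = X_1 + ⋯ + X_n. Then for any x ∈ ℝ, δ > 0 and even n, P(S_n ∈ [x−δ, x+δ]) ≤ 4·P(S_n ∈ (−δ, δ)). In particular, P(|S_{2n+1}| < ε) ≤ 4·P(|S_{2n}| < ε) for every ε > 0. -/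
open MeasureTheory ProbabilityTheory Filter Set
open scoped ENNReal


noncomputable def eker (η : ℝ) : ℝ → ℝ≥0∞ := fun t => if |t| ≤ η then 1 else 0

lemma eker_meas (η : ℝ) : Measurable (eker η) :=
  Measurable.ite (measurableSet_le measurable_abs measurable_const) measurable_const
    measurable_const

lemma eker_neg (η t : ℝ) : eker η (-t) = eker η t := by simp [eker, abs_neg]

noncomputable def Kker (η : ℝ) : ℝ → ℝ≥0∞ := fun s => ∫⁻ u, eker η u * eker η (s - u)

lemma Kker_meas (η : ℝ) : Measurable (Kker η) :=
  Measurable.lintegral_prod_right' (f := fun p : ℝ × ℝ => eker η p.2 * eker η (p.1 - p.2))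
    (((eker_meas η).comp measurable_snd).mul
      ((eker_meas η).comp (measurable_fst.sub measurable_snd)))

lemma Kker_eq (η s : ℝ) :
    Kker η s = ENNReal.ofReal (min η (s + η) - max (-η) (s - η)) := by
  have h1 : ∀ u : ℝ, eker η u * eker η (s - u)
      = (Icc (max (-η) (s - η)) (min η (s + η))).indicator 1 u := by
    intro u
    have hset : u ∈ Icc (max (-η) (s - η)) (min η (s + η)) ↔ |u| ≤ η ∧ |s - u| ≤ η := by
      simp only [mem_Icc, abs_le, max_le_iff, le_min_iff]
      constructor
      · rintro ⟨⟨a, b⟩, c, d⟩; exact ⟨⟨a, c⟩, by constructor <;> linarith⟩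
      · rintro ⟨⟨a, b⟩, c, d⟩; exact ⟨⟨a, by linarith⟩, b, by linarith⟩
    by_cases h1 : |u| ≤ η <;> by_cases h2 : |s - u| ≤ η <;>
      simp [eker, h1, h2, indicator, hset]
  simp only [Kker, h1]
  rw [lintegral_indicator_one measurableSet_Icc, Real.volume_Icc]

lemma Kker_lower {η : ℝ} {s : ℝ} (hs : |s| ≤ η) : ENNReal.ofReal η ≤ Kker η s := by
  rw [Kker_eq]
  apply ENNReal.ofReal_le_ofReal
  obtain ⟨h1, h2⟩ := abs_le.1 hs
  rcases le_total s 0 with h | h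
  · rw [min_eq_right (by linarith), max_eq_left (by linarith)]; linarith
  · rw [min_eq_left (by linarith), max_eq_right (by linarith)]; linarith

lemma Kker_upper {η : ℝ} (hη : 0 < η) (s : ℝ) :
    Kker η s ≤ (Ioo (-(2 * η)) (2 * η)).indicator (fun _ => ENNReal.ofReal (2 * η)) s := by
  rw [Kker_eq]
  by_cases h : s ∈ Ioo (-(2 * η)) (2 * η)
  · rw [indicator_of_mem h]
    apply ENNReal.ofReal_le_ofReal
    have := min_le_left η (s + η)
    have := le_max_left (-η) (s - η)
    linarith
  · rw [indicator_of_notMem h]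
    simp only [mem_Ioo, not_and_or, not_lt] at h
    have hle : min η (s + η) - max (-η) (s - η) ≤ 0 := by
      rcases h with h | h
      · have := min_le_right η (s + η)
        have := le_max_left (-η) (s - η)
        linarith
      · have := min_le_left η (s + η)
        have := le_max_right (-η) (s - η)
        linarith
    exact le_of_eq (ENNReal.ofReal_eq_zero.2 hle)

lemma conv_icc_le (ρ : Measure ℝ) [IsProbabilityMeasure ρ]
    (hρ : ρ.map (fun a => -a) = ρ) {η : ℝ} (hη : 0 < η) (c : ℝ) :
    ((ρ.prod ρ).map (fun p : ℝ × ℝ => p.1 + p.2)) (Icc (c - η) (c + η))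
      ≤ 2 * ((ρ.prod ρ).map (fun p : ℝ × ℝ => p.1 + p.2)) (Ioo (-(2 * η)) (2 * η)) := by
  set ν := (ρ.prod ρ).map (fun p : ℝ × ℝ => p.1 + p.2) with hν
  set F : ℝ → ℝ≥0∞ := fun w => ∫⁻ b, eker η (w + b) ∂ρ with hFdef
  have hFm : Measurable F :=
    Measurable.lintegral_prod_right' (f := fun p : ℝ × ℝ => eker η (p.1 + p.2))
      ((eker_meas η).comp (measurable_fst.add measurable_snd))
  -- the symmetrized factor
  have hsymm : ∀ d : ℝ, (∫⁻ a, eker η (a - d) ∂ρ) = F d := by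
    intro d
    conv_lhs => rw [← hρ]
    rw [lintegral_map (f := fun a : ℝ => eker η (a - d)) (g := fun a : ℝ => -a)
      ((eker_meas η).comp (measurable_id.sub_const d)) measurable_neg]
    simp only [hFdef]
    congr 1
    funext a
    rw [show -a - d = -(d + a) by ring, eker_neg]
  -- the key identity
  have key : ∀ c : ℝ, (∫⁻ s, Kker η (s - c) ∂ν) = ∫⁻ w, F w * F (w + c) := by
    intro c
    rw [hν, lintegral_map (f := fun s : ℝ => Kker η (s - c)) (g := fun p : ℝ × ℝ => p.1 + p.2)
      ((Kker_meas η).comp (measurable_id.sub_const c)) measurable_add]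
    rw [lintegral_prod (fun p : ℝ × ℝ => Kker η (p.1 + p.2 - c)) (((Kker_meas η).comp
      ((measurable_fst.add measurable_snd).sub_const c)).aemeasurable)]
    have h1 : ∀ a b : ℝ, Kker η (a + b - c) = ∫⁻ w, eker η (w + b) * eker η (a - c - w) := by
      intro a b
      have ht := lintegral_add_right_eq_self (μ := volume)
        (fun u => eker η u * eker η (a + b - c - u)) b
      rw [Kker, ← ht]
      congr 1
      funext w
      rw [show a + b - c - (w + b) = a - c - w by ring]
    calc (∫⁻ a, ∫⁻ b, Kker η (a + b - c) ∂ρ ∂ρ)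
        = ∫⁻ a, ∫⁻ b, ∫⁻ w, eker η (w + b) * eker η (a - c - w) ∂volume ∂ρ ∂ρ := by
          simp_rw [h1]
      _ = ∫⁻ a, ∫⁻ w, ∫⁻ b, eker η (w + b) * eker η (a - c - w) ∂ρ ∂volume ∂ρ := by
          congr 1; funext a
          exact lintegral_lintegral_swap
            ((((eker_meas η).comp (measurable_snd.add measurable_fst)).mul
              ((eker_meas η).comp ((measurable_const.sub measurable_snd)))).aemeasurable)
      _ = ∫⁻ a, ∫⁻ w, F w * eker η (a - c - w) ∂volume ∂ρ := by
          congr 1; funext a; congr 1; funext w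
          rw [lintegral_mul_const (f := fun b : ℝ => eker η (w + b)) _
            ((eker_meas η).comp (measurable_const_add w))]
      _ = ∫⁻ w, ∫⁻ a, F w * eker η (a - c - w) ∂ρ ∂volume := by
          exact lintegral_lintegral_swap
            (((hFm.comp measurable_snd).mul
              ((eker_meas η).comp ((measurable_fst.sub_const c).sub measurable_snd))).aemeasurable)
      _ = ∫⁻ w, F w * F (w + c) := by
          congr 1; funext w
          rw [lintegral_const_mul (f := fun a : ℝ => eker η (a - c - w)) _
            ((eker_meas η).comp ((measurable_id.sub_const c).sub_const w))]
          have : (∫⁻ a, eker η (a - c - w) ∂ρ) = F (w + c) := by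
            rw [show (fun a : ℝ => eker η (a - c - w)) = fun a : ℝ => eker η (a - (w + c)) by
              funext a; rw [show a - c - w = a - (w + c) by ring]]
            exact hsymm (w + c)
          rw [this]
  -- Cauchy-Schwarz
  have hCS : ∀ c : ℝ, (∫⁻ w, F w * F (w + c)) ≤ ∫⁻ w, F w * F w := by
    intro c
    have h2 : Real.HolderConjugate 2 2 := Real.HolderConjugate.two_two
    have hFc : AEMeasurable (fun w => F (w + c)) (volume : Measure ℝ) :=
      (hFm.comp (measurable_add_const c)).aemeasurable
    calc (∫⁻ w, F w * F (w + c))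
        ≤ (∫⁻ w, F w ^ (2:ℝ)) ^ (1/(2:ℝ)) * (∫⁻ w, F (w + c) ^ (2:ℝ)) ^ (1/(2:ℝ)) :=
          ENNReal.lintegral_mul_le_Lp_mul_Lq volume h2 hFm.aemeasurable hFc
      _ = (∫⁻ w, F w ^ (2:ℝ)) ^ (1/(2:ℝ)) * (∫⁻ w, F w ^ (2:ℝ)) ^ (1/(2:ℝ)) := by
          rw [lintegral_add_right_eq_self (fun w => F w ^ (2:ℝ)) c]
      _ = ∫⁻ w, F w ^ (2:ℝ) := by
          rw [← ENNReal.rpow_add_of_nonneg _ _ (by norm_num) (by norm_num)]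
          norm_num
      _ = ∫⁻ w, F w * F w := by
          congr 1; funext w
          rw [show (2:ℝ) = ((2:ℕ):ℝ) by norm_num, ENNReal.rpow_natCast, pow_two]
  -- lower bound
  have lower : ENNReal.ofReal η * ν (Icc (c - η) (c + η)) ≤ ∫⁻ s, Kker η (s - c) ∂ν := by
    rw [← setLIntegral_const (Icc (c - η) (c + η)) (ENNReal.ofReal η)]
    calc (∫⁻ _ in Icc (c - η) (c + η), ENNReal.ofReal η ∂ν)
        ≤ ∫⁻ s in Icc (c - η) (c + η), Kker η (s - c) ∂ν := by
          apply setLIntegral_mono (g := fun s : ℝ => Kker η (s - c))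
            ((Kker_meas η).comp (measurable_id.sub_const c))
          intro s hs
          apply Kker_lower
          rw [abs_le]
          exact ⟨by linarith [hs.1], by linarith [hs.2]⟩
      _ ≤ ∫⁻ s, Kker η (s - c) ∂ν := setLIntegral_le_lintegral _ _
  -- upper bound
  have upper : (∫⁻ s, Kker η s ∂ν) ≤ ENNReal.ofReal (2 * η) * ν (Ioo (-(2 * η)) (2 * η)) := by
    calc (∫⁻ s, Kker η s ∂ν)
        ≤ ∫⁻ s, (Ioo (-(2 * η)) (2 * η)).indicator (fun _ => ENNReal.ofReal (2 * η)) s ∂ν :=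
          lintegral_mono (Kker_upper hη)
      _ = ENNReal.ofReal (2 * η) * ν (Ioo (-(2 * η)) (2 * η)) := by
          rw [lintegral_indicator measurableSet_Ioo, setLIntegral_const]
  -- combine
  have main : ENNReal.ofReal η * ν (Icc (c - η) (c + η))
      ≤ ENNReal.ofReal η * (2 * ν (Ioo (-(2 * η)) (2 * η))) := by
    calc ENNReal.ofReal η * ν (Icc (c - η) (c + η))
        ≤ ∫⁻ s, Kker η (s - c) ∂ν := lower
      _ = ∫⁻ w, F w * F (w + c) := key c
      _ ≤ ∫⁻ w, F w * F w := hCS c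
      _ = ∫⁻ w, F w * F (w + 0) := by simp
      _ = ∫⁻ s, Kker η (s - 0) ∂ν := (key 0).symm
      _ = ∫⁻ s, Kker η s ∂ν := by simp
      _ ≤ ENNReal.ofReal (2 * η) * ν (Ioo (-(2 * η)) (2 * η)) := upper
      _ = ENNReal.ofReal η * (2 * ν (Ioo (-(2 * η)) (2 * η))) := by
          rw [ENNReal.ofReal_mul (by norm_num : (0:ℝ) ≤ 2)]
          rw [ENNReal.ofReal_ofNat]
          ring
  exact (ENNReal.mul_le_mul_iff_right (ENNReal.ofReal_pos.2 hη).ne' ENNReal.ofReal_ne_top).1 main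


noncomputable def convPow (c : Measure ℝ) : ℕ → Measure ℝ
  | 0 => Measure.dirac 0
  | k + 1 => (c.prod (convPow c k)).map (fun p : ℝ × ℝ => p.1 + p.2)

instance convPow_prob (c : Measure ℝ) [IsProbabilityMeasure c] (k : ℕ) :
    IsProbabilityMeasure (convPow c k) := by
  induction k with
  | zero => rw [convPow]; infer_instance
  | succ k ih =>
    rw [convPow]
    haveI := ih
    exact Measure.isProbabilityMeasure_map measurable_add.aemeasurable

lemma sum_indep {Ω : Type*} [MeasurableSpace Ω] {μ : Measure Ω} [IsProbabilityMeasure μ]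
    {X : ℕ → Ω → ℝ} (hmeas : ∀ i, Measurable (X i))
    (hindep : iIndepFun X μ) {s t : Finset ℕ} (hst : Disjoint s t) :
    IndepFun (fun ω => ∑ i ∈ s, X i ω) (fun ω => ∑ i ∈ t, X i ω) μ := by
  have h := (hindep.indepFun_finset s t hst hmeas).comp
    (Finset.measurable_sum Finset.univ fun (i : s) _ => measurable_pi_apply i)
    (Finset.measurable_sum Finset.univ fun (i : t) _ => measurable_pi_apply i)
  have e1 : ((fun v : s → ℝ => ∑ i, v i) ∘ fun a (i : s) => X i a)
      = fun ω => ∑ i ∈ s, X i ω := by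
    funext ω; simp only [Function.comp]; exact Finset.sum_coe_sort s fun i => X i ω
  have e2 : ((fun v : t → ℝ => ∑ i, v i) ∘ fun a (i : t) => X i a)
      = fun ω => ∑ i ∈ t, X i ω := by
    funext ω; simp only [Function.comp]; exact Finset.sum_coe_sort t fun i => X i ω
  rwa [e1, e2] at h

lemma sum_law {Ω : Type*} [MeasurableSpace Ω] {μ : Measure Ω} [IsProbabilityMeasure μ]
    {Y : ℕ → Ω → ℝ} (hmeas : ∀ i, Measurable (Y i))
    (hindep : iIndepFun Y μ) {c : Measure ℝ}
    (hlaw : ∀ i, μ.map (Y i) = c) (s : Finset ℕ) :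
    μ.map (fun ω => ∑ i ∈ s, Y i ω) = convPow c s.card := by
  induction s using Finset.cons_induction with
  | empty =>
    simp only [Finset.sum_empty, Finset.card_empty, convPow]
    rw [Measure.map_const, measure_univ, one_smul]
  | cons a t ha ih =>
    have hsum : Measurable fun ω => ∑ i ∈ t, Y i ω :=
      Finset.measurable_sum t fun i _ => hmeas i
    have hInd : IndepFun (Y a) (fun ω => ∑ i ∈ t, Y i ω) μ := by
      have h := sum_indep hmeas hindep (s := {a}) (t := t)
        (Finset.disjoint_singleton_left.2 ha)
      simpa using h
    have hpair : μ.map (fun ω => (Y a ω, ∑ i ∈ t, Y i ω))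
        = (μ.map (Y a)).prod (μ.map fun ω => ∑ i ∈ t, Y i ω) :=
      (indepFun_iff_map_prod_eq_prod_map_map (hmeas a).aemeasurable hsum.aemeasurable).1 hInd
    have e : (fun ω => ∑ i ∈ Finset.cons a t ha, Y i ω)
        = (fun p : ℝ × ℝ => p.1 + p.2) ∘ (fun ω => (Y a ω, ∑ i ∈ t, Y i ω)) := by
      funext ω; simp [Finset.sum_cons, Finset.sum_insert ha]
    rw [e, ← Measure.map_map measurable_add ((hmeas a).prodMk hsum), hpair, hlaw, ih,
      Finset.card_cons, convPow]

lemma part1main (ρ : Measure ℝ) [IsProbabilityMeasure ρ]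
    (hρ : ρ.map (fun a => -a) = ρ) {δ : ℝ} (hδ : 0 < δ) (x : ℝ) :
    ((ρ.prod ρ).map (fun p : ℝ × ℝ => p.1 + p.2)) (Icc (x - δ) (x + δ))
      ≤ 4 * ((ρ.prod ρ).map (fun p : ℝ × ℝ => p.1 + p.2)) (Ioo (-δ) δ) := by
  set ν := (ρ.prod ρ).map (fun p : ℝ × ℝ => p.1 + p.2) with hν
  have h1 := conv_icc_le ρ hρ (half_pos hδ) (x - δ / 2)
  have h2 := conv_icc_le ρ hρ (half_pos hδ) (x + δ / 2)
  rw [show 2 * (δ / 2) = δ by ring] at h1 h2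
  have hsub : Icc (x - δ) (x + δ)
      ⊆ Icc ((x - δ / 2) - δ / 2) ((x - δ / 2) + δ / 2)
        ∪ Icc ((x + δ / 2) - δ / 2) ((x + δ / 2) + δ / 2) := by
    intro y hy
    rcases le_total y x with h | h
    · exact Or.inl ⟨by linarith [hy.1], by linarith⟩
    · exact Or.inr ⟨by linarith, by linarith [hy.2]⟩
  calc ν (Icc (x - δ) (x + δ))
      ≤ ν (Icc ((x - δ / 2) - δ / 2) ((x - δ / 2) + δ / 2)
          ∪ Icc ((x + δ / 2) - δ / 2) ((x + δ / 2) + δ / 2)) := measure_mono hsub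
    _ ≤ ν (Icc ((x - δ / 2) - δ / 2) ((x - δ / 2) + δ / 2))
        + ν (Icc ((x + δ / 2) - δ / 2) ((x + δ / 2) + δ / 2)) := measure_union_le _ _
    _ ≤ 2 * ν (Ioo (-δ) δ) + 2 * ν (Ioo (-δ) δ) := add_le_add h1 h2
    _ = 4 * ν (Ioo (-δ) δ) := by ring

/-- For a random walk with i.i.d. symmetric steps: for even `n`,
`P(S_n ∈ [x−δ, x+δ]) ≤ 4 P(S_n ∈ (−δ, δ))`; in particular
`P(|S_{2n+1}| < ε) ≤ 4 P(|S_{2n}| < ε)`. -/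
theorem stmt7 {Ω : Type*} [MeasurableSpace Ω] (μ : Measure Ω) [IsProbabilityMeasure μ]
    (X : ℕ → Ω → ℝ) (hmeas : ∀ i, Measurable (X i))
    (hindep : iIndepFun X μ)
    (hident : ∀ i, IdentDistrib (X i) (X 0) μ μ)
    (hsym : Measure.map (X 0) μ = Measure.map (fun ω => -X 0 ω) μ)
    (S : ℕ → Ω → ℝ) (hS : ∀ n ω, S n ω = ∑ i ∈ Finset.range n, X i ω) :
    (∀ n : ℕ, Even n → ∀ x δ : ℝ, 0 < δ →
      μ {ω | S n ω ∈ Set.Icc (x - δ) (x + δ)} ≤ 4 * μ {ω | S n ω ∈ Set.Ioo (-δ) δ}) ∧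
    (∀ (n : ℕ) (ε : ℝ), 0 < ε →
      μ {ω | |S (2 * n + 1) ω| < ε} ≤ 4 * μ {ω | |S (2 * n) ω| < ε}) := by
  have hSm : ∀ n, Measurable (S n) := by
    intro n
    rw [show S n = fun ω => ∑ i ∈ Finset.range n, X i ω from funext (hS n)]
    exact Finset.measurable_sum _ fun i _ => hmeas i
  set μ₀ := μ.map (X 0) with hμ₀
  haveI : IsProbabilityMeasure μ₀ := Measure.isProbabilityMeasure_map (hmeas 0).aemeasurable
  have hlaw : ∀ i, μ.map (X i) = μ₀ := fun i => (hident i).map_eq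
  have hnegmeas : ∀ i, Measurable (fun ω => -X i ω) := fun i => (hmeas i).neg
  have hnegindep : iIndepFun (fun i ω => -X i ω) μ :=
    hindep.comp (fun _ (x : ℝ) => -x) (fun _ => measurable_neg)
  have hneglaw : ∀ i, μ.map (fun ω => -X i ω) = μ₀ := by
    intro i
    calc μ.map (fun ω => -X i ω)
        = Measure.map Neg.neg (μ.map (X i)) := (Measure.map_map measurable_neg (hmeas i)).symm
      _ = Measure.map Neg.neg (μ.map (X 0)) := by rw [hlaw i, hμ₀]
      _ = μ.map (fun ω => -X 0 ω) := Measure.map_map measurable_neg (hmeas 0)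
      _ = μ₀ := hsym.symm
  -- part 1 at the level of laws
  have P1 : ∀ n : ℕ, Even n → ∀ x δ : ℝ, 0 < δ →
      (μ.map (S n)) (Icc (x - δ) (x + δ)) ≤ 4 * (μ.map (S n)) (Ioo (-δ) δ) := by
    rintro n ⟨m, rfl⟩ x δ hδ
    set ρ := convPow μ₀ m with hρdef
    have hAmeas : Measurable fun ω => ∑ i ∈ Finset.range m, X i ω :=
      Finset.measurable_sum _ fun i _ => hmeas i
    have hBmeas : Measurable fun ω => ∑ i ∈ Finset.Ico m (m + m), X i ω :=
      Finset.measurable_sum _ fun i _ => hmeas i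
    have hρ1 : μ.map (fun ω => ∑ i ∈ Finset.range m, X i ω) = ρ := by
      rw [sum_law hmeas hindep hlaw, Finset.card_range]
    have hρsym : ρ.map (fun a : ℝ => -a) = ρ := by
      rw [← hρ1, Measure.map_map measurable_neg hAmeas]
      rw [show ((fun a : ℝ => -a) ∘ fun ω => ∑ i ∈ Finset.range m, X i ω)
          = fun ω => ∑ i ∈ Finset.range m, -X i ω by
        funext ω; simp]
      rw [sum_law hnegmeas hnegindep hneglaw, Finset.card_range]
      exact hρ1.symm
    have hB : μ.map (fun ω => ∑ i ∈ Finset.Ico m (m + m), X i ω) = ρ := by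
      rw [sum_law hmeas hindep hlaw, Nat.card_Ico]
      congr 1
      omega
    have hInd : IndepFun (fun ω => ∑ i ∈ Finset.range m, X i ω)
        (fun ω => ∑ i ∈ Finset.Ico m (m + m), X i ω) μ := by
      apply sum_indep hmeas hindep
      rw [Finset.disjoint_left]
      intro i hi hi'
      simp only [Finset.mem_range] at hi
      simp only [Finset.mem_Ico] at hi'
      omega
    have hSn : μ.map (S (m + m)) = (ρ.prod ρ).map (fun p : ℝ × ℝ => p.1 + p.2) := by
      have hsplit : S (m + m) = (fun p : ℝ × ℝ => p.1 + p.2) ∘ (fun ω =>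
          ((∑ i ∈ Finset.range m, X i ω), ∑ i ∈ Finset.Ico m (m + m), X i ω)) := by
        funext ω
        rw [hS]
        simp only [Function.comp]
        rw [Finset.range_eq_Ico,
          ← Finset.sum_Ico_consecutive _ (Nat.zero_le m) (Nat.le_add_right m m),
          ← Finset.range_eq_Ico]
      rw [hsplit, ← Measure.map_map measurable_add (hAmeas.prodMk hBmeas),
        (indepFun_iff_map_prod_eq_prod_map_map hAmeas.aemeasurable hBmeas.aemeasurable).1 hInd,
        hρ1, hB]
    rw [hSn]
    exact part1main ρ hρsym hδ x
  refine ⟨?_, ?_⟩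
  · intro n hn x δ hδ
    have := P1 n hn x δ hδ
    rwa [Measure.map_apply (hSm n) measurableSet_Icc,
      Measure.map_apply (hSm n) measurableSet_Ioo] at this
  · intro n ε hε
    set ν := μ.map (S (2 * n)) with hν
    haveI : IsProbabilityMeasure ν := Measure.isProbabilityMeasure_map (hSm _).aemeasurable
    have hInd : IndepFun (X (2 * n)) (S (2 * n)) μ := by
      have h := sum_indep hmeas hindep (s := {2 * n}) (t := Finset.range (2 * n))
        (by simp [Finset.disjoint_singleton_left])
      simp only [Finset.sum_singleton] at h
      rwa [show (fun ω => ∑ i ∈ Finset.range (2 * n), X i ω) = S (2 * n) from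
        (funext (hS (2 * n))).symm] at h
    have hS1 : μ.map (S (2 * n + 1)) = (μ₀.prod ν).map (fun p : ℝ × ℝ => p.1 + p.2) := by
      have e : S (2 * n + 1) = (fun p : ℝ × ℝ => p.1 + p.2) ∘
          (fun ω => (X (2 * n) ω, S (2 * n) ω)) := by
        funext ω
        simp only [Function.comp, hS, Finset.sum_range_succ]
        ring
      rw [e, ← Measure.map_map measurable_add ((hmeas _).prodMk (hSm _)),
        (indepFun_iff_map_prod_eq_prod_map_map (hmeas _).aemeasurable (hSm _).aemeasurable).1
          hInd, hlaw, hν]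
    have hsets : {ω | |S (2 * n + 1) ω| < ε} = S (2 * n + 1) ⁻¹' (Ioo (-ε) ε) := by
      ext ω; simp [abs_lt]
    have hsets2 : {ω | |S (2 * n) ω| < ε} = S (2 * n) ⁻¹' (Ioo (-ε) ε) := by
      ext ω; simp [abs_lt]
    rw [hsets, hsets2, ← Measure.map_apply (hSm _) measurableSet_Ioo,
      ← Measure.map_apply (hSm _) measurableSet_Ioo, hS1, ← hν,
      Measure.map_apply measurable_add measurableSet_Ioo,
      Measure.prod_apply (measurable_add measurableSet_Ioo)]
    have hpoint : ∀ b : ℝ,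
        ν (Prod.mk b ⁻¹' ((fun p : ℝ × ℝ => p.1 + p.2) ⁻¹' Ioo (-ε) ε))
          ≤ 4 * ν (Ioo (-ε) ε) := by
      intro b
      refine le_trans (measure_mono ?_) (P1 (2 * n) (even_two_mul n) (-b) ε hε)
      intro s hs
      simp only [mem_preimage, mem_Ioo] at hs
      exact ⟨by linarith [hs.1], by linarith [hs.2]⟩
    calc (∫⁻ b, ν (Prod.mk b ⁻¹' ((fun p : ℝ × ℝ => p.1 + p.2) ⁻¹' Ioo (-ε) ε)) ∂μ₀)
        ≤ ∫⁻ _, 4 * ν (Ioo (-ε) ε) ∂μ₀ := lintegral_mono hpoint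
      _ = 4 * ν (Ioo (-ε) ε) := by rw [lintegral_const, measure_univ, mul_one]
end
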